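/- arXiv:2108.10756 — 8 statements merged into one kernel-verified Lean document; each statement's English description precedes it below -/
import Mathlib

section
/- Let λ be a real number with λ ≠ 0 and λ ≠ 1, and let z be a complex number with z ≠ 0, z ≠ 1, |z| < 1 and |((λ-1)/λ)·z| < 1. Then the series Σ_{n=0}^{∞} (1-λ)^{n+2} · y(n,λ) · z^n converges and equals log(1 - ((λ-1)/λ)·z) / (z·(z-1)), where log denotes the principal branch of the complex logarithm. -/
set_option maxHeartbeats 1000000

/-- The numbers `y(n,λ)` from the paper:
`y(n,λ) = ∑_{j=0}^{n} (-1)^n / ((j+1) · λ^{j+1} · (λ-1)^{n+1-j})`. -/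
noncomputable def ynum (n : ℕ) (l : ℝ) : ℝ :=
  ∑ j ∈ Finset.range (n + 1),
    (-1 : ℝ) ^ n / ((j + 1) * l ^ (j + 1) * (l - 1) ^ (n + 1 - j))

lemma key_term (L z : ℂ) (hL : L ≠ 0) (hL1 : L - 1 ≠ 0) (n j : ℕ) (hj : j ≤ n) :
    (1 - L) ^ (n + 2) * ((-1 : ℂ) ^ n / (((j : ℂ) + 1) * L ^ (j + 1) * (L - 1) ^ (n + 1 - j)))
      * z ^ n
    = ((L - 1) / L) ^ (j + 1) * z ^ j / ((j : ℂ) + 1) * z ^ (n - j) := by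
  have h1 : (1 - L) ^ (n + 2) = (-1 : ℂ) ^ n * ((L - 1) ^ (n + 1 - j) * (L - 1) ^ (j + 1)) := by
    rw [← pow_add, show n + 1 - j + (j + 1) = n + 2 by omega,
      show (1 - L) = (-1) * (L - 1) by ring, mul_pow, pow_add]
    norm_num
  have h2 : z ^ j * z ^ (n - j) = z ^ n := by
    rw [← pow_add, show j + (n - j) = n by omega]
  have hj1 : ((j : ℂ) + 1) ≠ 0 := Nat.cast_add_one_ne_zero j
  have hLp : L ^ (j + 1) ≠ 0 := pow_ne_zero _ hL
  have hL1p : (L - 1) ^ (n + 1 - j) ≠ 0 := pow_ne_zero _ hL1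
  have hsq : ((-1 : ℂ) ^ n) ^ 2 = 1 := by
    rw [← pow_mul, mul_comm]; exact Even.neg_one_pow ⟨n, by ring⟩
  rw [h1, div_pow]
  field_simp
  rw [← h2]
  ring_nf
  simp [pow_mul, hsq]

theorem stmt_0 (l : ℝ) (hl0 : l ≠ 0) (hl1 : l ≠ 1) (z : ℂ)
    (hz0 : z ≠ 0) (hz1 : z ≠ 1) (hz : ‖z‖ < 1)
    (hz2 : ‖(((l - 1) / l : ℝ) : ℂ) * z‖ < 1) :
    HasSum (fun n : ℕ => (((1 - l) ^ (n + 2) * ynum n l : ℝ) : ℂ) * z ^ n)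
      (Complex.log (1 - (((l - 1) / l : ℝ) : ℂ) * z) / (z * (z - 1))) := by
  set μ : ℂ := (((l - 1) / l : ℝ) : ℂ) with hμ
  set w : ℂ := μ * z with hw
  have hwn : ‖w‖ < 1 := hz2
  have hzn : ‖z‖ < 1 := hz
  set f : ℕ → ℂ := fun k => μ ^ (k + 1) * z ^ k / ((k : ℂ) + 1) with hf
  set g : ℕ → ℂ := fun k => z ^ k with hg
  have hlog : HasSum (fun n : ℕ => w ^ n / n) (-Complex.log (1 - w)) :=
    Complex.hasSum_taylorSeries_neg_log hwn
  have hlog1 : HasSum (fun n : ℕ => w ^ (n + 1) / ((n : ℂ) + 1)) (-Complex.log (1 - w)) := by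
    have h := (hasSum_nat_add_iff' (f := fun n : ℕ => w ^ n / (n : ℂ)) 1).mpr hlog
    simp only [Finset.range_one, Finset.sum_singleton, Nat.cast_zero, pow_zero] at h
    norm_num at h
    exact_mod_cast h
  have hfsum : HasSum f (-Complex.log (1 - w) / z) := by
    have h := hlog1.div_const z
    convert h using 2 with k
    · rfl
    have hk : ((k : ℂ) + 1) ≠ 0 := Nat.cast_add_one_ne_zero k
    simp only [hf, hw]
    field_simp
    ring
  have hgsum : HasSum g (1 - z)⁻¹ := hasSum_geometric_of_norm_lt_one hzn
  have hfn : Summable (fun k => ‖f k‖) := by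
    have hbound : ∀ k, ‖f k‖ ≤ ‖μ‖ * ‖w‖ ^ k := by
      intro k
      simp only [hf, norm_div, norm_mul, norm_pow]
      have h1 : ‖μ‖ ^ (k + 1) * ‖z‖ ^ k = ‖μ‖ * ‖w‖ ^ k := by
        rw [hw, norm_mul, mul_pow, pow_succ']
        ring
      rw [h1]
      have h2 : (1 : ℝ) ≤ ‖((k : ℂ) + 1)‖ := by
        have h3 : ((k : ℂ) + 1) = ((k + 1 : ℕ) : ℂ) := by push_cast; ring
        rw [h3, Complex.norm_natCast]
        exact_mod_cast Nat.one_le_iff_ne_zero.mpr (Nat.succ_ne_zero k)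
      exact div_le_self (by positivity) h2
    exact Summable.of_nonneg_of_le (fun k => norm_nonneg _) hbound
      ((summable_geometric_of_lt_one (norm_nonneg w) hwn).mul_left _)
  have hgn : Summable (fun k => ‖g k‖) := by
    simpa [hg] using (summable_geometric_of_lt_one (norm_nonneg z) hzn).norm
  have hcauchy := hasSum_sum_range_mul_of_summable_norm hfn hgn
  rw [hfsum.tsum_eq, hgsum.tsum_eq] at hcauchy
  have hval : -Complex.log (1 - w) / z * (1 - z)⁻¹
      = Complex.log (1 - w) / (z * (z - 1)) := by
    have h1z : (1 : ℂ) - z ≠ 0 := by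
      intro h; apply hz1; linear_combination -h
    have hz1' : z - 1 ≠ 0 := sub_ne_zero.mpr hz1
    field_simp
    ring
  rw [hval] at hcauchy
  convert hcauchy using 2 with n
  · rfl
  have hL0 : (l : ℂ) ≠ 0 := by exact_mod_cast hl0
  have hL1 : (l : ℂ) - 1 ≠ 0 := by
    intro h
    apply hl1
    have h2 : (l : ℂ) = 1 := by linear_combination h
    exact_mod_cast h2
  simp only [ynum, hf, hg]
  push_cast
  rw [Finset.mul_sum, Finset.sum_mul]
  apply Finset.sum_congr rfl
  intro j hj
  rw [Finset.mem_range] at hj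
  have hkey := key_term (l : ℂ) z hL0 hL1 n j (by omega)
  rw [hμ]
  push_cast
  rw [hkey]
end

section
/- Let m be a nonnegative integer and let λ be a real number with λ ≠ 0 and λ ≠ 1. Then y(m,λ) = Σ_{v=0}^{m} Σ_{n=0}^{v} (-1)^{v-m} · (λ-1)^{v-m-1} · B_n · S₁(v,n) / (λ^{v+1} · v!). -/
/-- The signed Stirling numbers of the first kind, defined by the recurrence
`S₁(n+1,k) = S₁(n,k-1) - n·S₁(n,k)`, equivalently by
`∑_{k=0}^{n} S₁(n,k)·x^k = x·(x-1)···(x-n+1)`. -/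
def S1 : ℕ → ℕ → ℤ
  | 0, 0 => 1
  | 0, _ + 1 => 0
  | n + 1, 0 => -(n : ℤ) * S1 n 0
  | n + 1, k + 1 => S1 n k - (n : ℤ) * S1 n (k + 1)

section Aux

open Polynomial Finset


lemma S1_coeff (v n : ℕ) : (descPochhammer ℚ v).coeff n = (S1 v n : ℚ) := by
  induction v generalizing n with
  | zero =>
    cases n with
    | zero => simp [S1]
    | succ n => simp [S1, coeff_one]
  | succ v ih =>
    have hc : (v : ℚ[X]) = C (v : ℚ) := (Polynomial.C_eq_natCast _).symm
    rw [descPochhammer_succ_right, mul_sub, coeff_sub, hc, mul_comm _ (C (v:ℚ)), coeff_C_mul]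
    cases n with
    | zero => simp [S1, ih, coeff_mul_X_zero]
    | succ n => rw [coeff_mul_X]; simp only [S1, ih]; push_cast; ring

lemma S1_eq_zero {v n : ℕ} (h : v < n) : S1 v n = 0 := by
  have := S1_coeff v n
  rw [coeff_eq_zero_of_natDegree_lt (by rwa [descPochhammer_natDegree])] at this
  exact_mod_cast this.symm

lemma S1_zero (v : ℕ) : S1 (v + 1) 0 = 0 := by
  induction v with
  | zero => simp [S1]
  | succ v ih =>
    show -((v:ℤ)+1) * S1 (v + 1) 0 = 0
    rw [ih]; ring

lemma S1_one (v : ℕ) : S1 (v + 1) 1 = (-1) ^ v * v.factorial := by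
  induction v with
  | zero => simp [S1]
  | succ v ih =>
    show S1 (v+1) 0 - (v+1 : ℤ) * S1 (v+1) 1 = _
    rw [S1_zero, ih, Nat.factorial_succ]
    push_cast; ring

lemma shift (v : ℕ) : (descPochhammer ℚ (v+1)).comp (X + 1) =
    descPochhammer ℚ (v+1) + C ((v:ℚ)+1) * descPochhammer ℚ v := by
  have h1 : (descPochhammer ℚ (v+1)).comp (X+1) = (X+1) * descPochhammer ℚ v := by
    rw [descPochhammer_succ_left, mul_comp, X_comp, comp_assoc, sub_comp, X_comp, one_comp,
      add_sub_cancel_right, comp_X]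
  rw [h1, descPochhammer_succ_right]
  have hc : (v : ℚ[X]) = C (v:ℚ) := (Polynomial.C_eq_natCast _).symm
  rw [hc, map_add, map_one]
  ring

lemma coeff_shift (v n : ℕ) :
    ((descPochhammer ℚ (v+1)).comp (X+1)).coeff n
      = ∑ k ∈ range (v+2), (S1 (v+1) k : ℚ) * (k.choose n : ℚ) := by
  conv_lhs => rw [(descPochhammer ℚ (v+1)).as_sum_range' (v+2)
    (by rw [descPochhammer_natDegree]; omega)]
  rw [show ∀ p q : ℚ[X], p.comp q = eval₂ C q p from fun _ _ => rfl, eval₂_finset_sum,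
    finset_sum_coeff]
  refine Finset.sum_congr rfl fun k hk => ?_
  rw [show eval₂ C (X+1) (monomial k ((descPochhammer ℚ (v+1)).coeff k))
      = (monomial k ((descPochhammer ℚ (v+1)).coeff k)).comp (X+1) from rfl,
    monomial_comp, coeff_C_mul, coeff_X_add_one_pow, S1_coeff]

lemma _root_.bernoulli_S1 (v : ℕ) :
    ((v:ℚ)+1) * ∑ n ∈ range (v+1), (_root_.bernoulli n) * (S1 v n : ℚ)
      = (-1)^v * v.factorial := by
  have hA : ∑ n ∈ range (v+2), _root_.bernoulli n * ((descPochhammer ℚ (v+1)).comp (X+1)).coeff n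
      = ∑ n ∈ range (v+2), _root_.bernoulli n * (S1 (v+1) n : ℚ)
        + ((v:ℚ)+1) * ∑ n ∈ range (v+1), _root_.bernoulli n * (S1 v n : ℚ) := by
    have step : ∀ n ∈ range (v+2), _root_.bernoulli n * ((descPochhammer ℚ (v+1)).comp (X+1)).coeff n
        = _root_.bernoulli n * (S1 (v+1) n : ℚ) + ((v:ℚ)+1) * (_root_.bernoulli n * (S1 v n : ℚ)) := by
      intro n _
      rw [shift, coeff_add, coeff_C_mul, S1_coeff, S1_coeff]; ring
    rw [Finset.sum_congr rfl step, Finset.sum_add_distrib, ← Finset.mul_sum]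
    congr 2
    rw [Finset.sum_range_succ, S1_eq_zero (Nat.lt_succ_self v)]
    simp
  have hB : ∑ n ∈ range (v+2), _root_.bernoulli n * ((descPochhammer ℚ (v+1)).comp (X+1)).coeff n
      = (S1 (v+1) 1 : ℚ) + ∑ k ∈ range (v+2), _root_.bernoulli k * (S1 (v+1) k : ℚ) := by
    have step : ∀ n ∈ range (v+2), _root_.bernoulli n * ((descPochhammer ℚ (v+1)).comp (X+1)).coeff n
        = ∑ k ∈ range (v+2), (S1 (v+1) k : ℚ) * ((k.choose n : ℚ) * _root_.bernoulli n) := by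
      intro n _
      rw [coeff_shift, Finset.mul_sum]
      exact Finset.sum_congr rfl fun k _ => by ring
    rw [Finset.sum_congr rfl step, Finset.sum_comm]
    have inner : ∀ k ∈ range (v+2),
        ∑ n ∈ range (v+2), (S1 (v+1) k : ℚ) * ((k.choose n : ℚ) * _root_.bernoulli n)
          = (S1 (v+1) k : ℚ) * ((if k = 1 then 1 else 0) + _root_.bernoulli k) := by
      intro k hk
      rw [← Finset.mul_sum]
      congr 1
      have hsub : range (k+1) ⊆ range (v+2) := by
        apply Finset.range_subset_range.2
        have := Finset.mem_range.mp hk; omega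
      rw [← Finset.sum_subset hsub (fun x _ hx => by
        rw [Nat.choose_eq_zero_of_lt (by simpa using hx)]; simp)]
      rw [Finset.sum_range_succ, _root_.sum_bernoulli, Nat.choose_self]
      simp
    rw [Finset.sum_congr rfl inner]
    have split : ∀ k ∈ range (v+2),
        (S1 (v+1) k : ℚ) * ((if k = 1 then 1 else 0) + _root_.bernoulli k)
          = (if k = 1 then (S1 (v+1) k : ℚ) else 0) + _root_.bernoulli k * (S1 (v+1) k : ℚ) := by
      intro k _
      by_cases h : k = 1 <;> simp [h] <;> ring
    rw [Finset.sum_congr rfl split, Finset.sum_add_distrib, Finset.sum_ite_eq'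
      (range (v+2)) 1 (fun k => (S1 (v+1) k : ℚ))]
    simp
  have h1 := hA.symm.trans hB
  have h2 : (S1 (v+1) 1 : ℚ) = (-1)^v * v.factorial := by
    rw [S1_one]; push_cast; ring
  push_cast at h1 h2 ⊢
  linarith [h1, h2]

lemma _root_.bernoulli_S1' (v : ℕ) :
    ∑ n ∈ range (v+1), (_root_.bernoulli n : ℝ) * (S1 v n : ℝ)
      = (-1)^v * v.factorial / ((v:ℝ)+1) := by
  have h := _root_.bernoulli_S1 v
  have hv : ((v:ℚ)+1) ≠ 0 := by positivity
  have h2 : ∑ n ∈ range (v+1), (_root_.bernoulli n) * (S1 v n : ℚ)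
      = (-1)^v * v.factorial / ((v:ℚ)+1) := by
    rw [eq_div_iff hv]
    push_cast at h ⊢
    linarith [h]
  have := congrArg (fun q : ℚ => (q : ℝ)) h2
  push_cast at this
  exact this

end Aux

theorem stmt_2 (m : ℕ) (l : ℝ) (hl0 : l ≠ 0) (hl1 : l ≠ 1) :
    ynum m l = ∑ v ∈ Finset.range (m + 1), ∑ n ∈ Finset.range (v + 1),
      (-1 : ℝ) ^ ((v : ℤ) - (m : ℤ)) * (l - 1) ^ ((v : ℤ) - (m : ℤ) - 1) *
        (bernoulli n : ℝ) * (S1 v n : ℝ) / (l ^ (v + 1) * (v.factorial : ℝ)) := by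
  have hl1' : l - 1 ≠ 0 := sub_ne_zero.mpr hl1
  unfold ynum
  refine Finset.sum_congr rfl fun v hv => ?_
  have hvm : v ≤ m := Nat.lt_succ_iff.mp (Finset.mem_range.mp hv)
  have hre : ∀ n ∈ Finset.range (v+1),
      (-1:ℝ)^((v:ℤ)-(m:ℤ)) * (l-1)^((v:ℤ)-(m:ℤ)-1) * (bernoulli n : ℝ) * (S1 v n : ℝ)
          / (l^(v+1) * (v.factorial:ℝ))
        = ((-1:ℝ)^((v:ℤ)-(m:ℤ)) * (l-1)^((v:ℤ)-(m:ℤ)-1) / (l^(v+1) * (v.factorial:ℝ)))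
          * ((bernoulli n : ℝ) * (S1 v n : ℝ)) := fun n _ => by ring
  rw [Finset.sum_congr rfl hre, ← Finset.mul_sum, bernoulli_S1']
  have e1 : (v:ℤ)-(m:ℤ) = -((m-v : ℕ):ℤ) := by rw [Nat.cast_sub hvm]; ring
  have e2 : (v:ℤ)-(m:ℤ)-1 = -(((m+1-v : ℕ)):ℤ) := by
    rw [Nat.cast_sub (by omega)]; push_cast; ring
  rw [e2, e1, zpow_neg, zpow_neg, zpow_natCast, zpow_natCast]
  have hinv : ((-1:ℝ)^(m-v))⁻¹ = (-1:ℝ)^(m-v) := by rw [← inv_pow]; norm_num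
  rw [hinv]
  have hsign : (-1:ℝ)^m = (-1:ℝ)^(m-v) * (-1)^v := by
    rw [← pow_add, Nat.sub_add_cancel hvm]
  rw [hsign]
  have h1 : ((v:ℝ)+1) ≠ 0 := by positivity
  have h2 : (v.factorial : ℝ) ≠ 0 := by positivity
  field_simp
end

section
/- Let n ≥ 1 be an integer and let λ be a real number with λ ≠ 0 and λ ≠ 1. Then H_{2n+2} - H_{n+1} = -1/(2(n+1)) + (n+1)·Σ_{k=0}^{2n-1} λ^{k+2}·y(k,λ)/(2n-k) + (n+1)·(λ-1)·Σ_{k=0}^{2n} λ^{k+1}·y(k,λ)/(2n+1-k). -/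
/-- The harmonic numbers `H_n = ∑_{k=1}^{n} 1/k` (with `H_0 = 0`). -/
noncomputable def harm (n : ℕ) : ℝ := ∑ k ∈ Finset.range n, 1 / ((k : ℝ) + 1)

lemma harm_succ (n : ℕ) : harm (n+1) = harm n + 1/((n:ℝ)+1) := by
  simp [harm, Finset.sum_range_succ]

lemma rec1 (n : ℕ) (l : ℝ) (hl0 : l ≠ 0) (hl1 : l ≠ 1) :
    (l - 1) * ynum (n+1) l = -ynum n l + (-1:ℝ)^(n+1) / (((n:ℝ)+2) * l^(n+2)) := by
  have hL : l - 1 ≠ 0 := sub_ne_zero.mpr hl1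
  unfold ynum
  rw [Finset.mul_sum, Finset.sum_range_succ]
  have h1 : ∀ j ∈ Finset.range (n+1),
      (l - 1) * ((-1:ℝ)^(n+1) / ((j+1) * l^(j+1) * (l-1)^(n+1+1-j)))
        = -((-1:ℝ)^n / ((j+1) * l^(j+1) * (l-1)^(n+1-j))) := by
    intro j hj
    have hj1 : ((j:ℝ)+1) ≠ 0 := by positivity
    have he : n+1+1-j = (n+1-j)+1 := by
      have := Finset.mem_range.mp hj; omega
    rw [he, pow_succ, pow_succ]
    field_simp
    ring
  rw [Finset.sum_congr rfl h1, Finset.sum_neg_distrib]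
  congr 1
  have he2 : n+1+1-(n+1) = 1 := by omega
  rw [he2, pow_one]
  have hn2 : ((n:ℝ)+1+1) ≠ 0 := by positivity
  field_simp
  push_cast
  ring

lemma keyrec (k : ℕ) (l : ℝ) (hl0 : l ≠ 0) (hl1 : l ≠ 1) :
    (l-1) * (l^(k+2) * ynum (k+1) l) + l * (l^(k+1) * ynum k l)
      = (-1:ℝ)^(k+1) / ((k:ℝ)+2) := by
  have h := rec1 k l hl0 hl1
  have hp : (l:ℝ)^(k+2) ≠ 0 := pow_ne_zero _ hl0
  have hk2 : ((k:ℝ)+2) ≠ 0 := by positivity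
  have h2 : (l-1) * (l^(k+2) * ynum (k+1) l) + l * (l^(k+1) * ynum k l)
      = l^(k+2) * ((l-1) * ynum (k+1) l + ynum k l) := by ring
  rw [h2, h]
  field_simp
  ring
lemma altH (n : ℕ) :
    ∑ k ∈ Finset.range (2*n+1), (-1:ℝ)^k/((k:ℝ)+1) = harm (2*n+1) - harm n := by
  induction n with
  | zero => simp [harm]
  | succ m ih =>
    have h1 : 2*(m+1)+1 = (2*m+1)+1+1 := by ring
    rw [h1, Finset.sum_range_succ, Finset.sum_range_succ, ih]
    rw [show harm (2*m+1+1+1) = harm (2*m+1) + 1/(2*(m:ℝ)+2) + 1/(2*(m:ℝ)+3) from by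
      rw [harm_succ (2*m+1+1), harm_succ (2*m+1)]; push_cast; ring]
    rw [harm_succ m]
    push_cast
    have h2 : ((2:ℝ)*m+1+1) ≠ 0 := by positivity
    have h3 : ((2:ℝ)*m+1+1+1) ≠ 0 := by positivity
    have h4 : ((m:ℝ)+1) ≠ 0 := by positivity
    have e1 : (-1:ℝ)^(2*m+1) = -1 := by
      rw [pow_succ, pow_mul]; norm_num
    have e2 : (-1:ℝ)^(2*m+1+1) = 1 := by
      rw [pow_succ, e1]; norm_num
    rw [e1, e2]
    field_simp
    ring

lemma Cval (n : ℕ) :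
    ∑ k ∈ Finset.range (2*n+1), (-1:ℝ)^k/(((k:ℝ)+1)*((2*n+1-k:ℕ):ℝ))
      = (harm (2*n+1) - harm n)/((n:ℝ)+1) := by
  have hrefl : ∑ k ∈ Finset.range (2*n+1), (-1:ℝ)^k/(((2*n+1-k:ℕ)):ℝ)
      = ∑ k ∈ Finset.range (2*n+1), (-1:ℝ)^k/((k:ℝ)+1) := by
    rw [← Finset.sum_range_reflect (fun k => (-1:ℝ)^k/((k:ℝ)+1)) (2*n+1)]
    apply Finset.sum_congr rfl
    intro k hk
    have hk' : k ≤ 2*n := by have := Finset.mem_range.mp hk; omega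
    have h1 : 2*n+1-1-k = 2*n-k := by omega
    have h2 : ((2*n-k:ℕ):ℝ) + 1 = ((2*n+1-k:ℕ):ℝ) := by
      push_cast [Nat.cast_sub hk', Nat.cast_sub (by omega : k ≤ 2*n+1)]; ring
    have h4 : (-1:ℝ)^(2*n-k) * (-1:ℝ)^k = 1 := by
      rw [← pow_add, show 2*n-k+k = 2*n by omega, pow_mul]; norm_num
    have h5 : (-1:ℝ)^k * (-1:ℝ)^k = 1 := by
      rw [← pow_add, ← two_mul, pow_mul]; norm_num
    have h3 : (-1:ℝ)^(2*n-k) = (-1:ℝ)^k := by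
      calc (-1:ℝ)^(2*n-k) = (-1:ℝ)^(2*n-k) * ((-1:ℝ)^k*(-1:ℝ)^k) := by rw [h5, mul_one]
        _ = ((-1:ℝ)^(2*n-k)*(-1:ℝ)^k)*(-1:ℝ)^k := by ring
        _ = (-1:ℝ)^k := by rw [h4, one_mul]
    simp only [h1, h2, h3]
  have hpf : ∀ k ∈ Finset.range (2*n+1),
      (-1:ℝ)^k/(((k:ℝ)+1)*((2*n+1-k:ℕ):ℝ))
        = (1/(2*(n:ℝ)+2)) * ((-1:ℝ)^k/((k:ℝ)+1) + (-1:ℝ)^k/(((2*n+1-k:ℕ)):ℝ)) := by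
    intro k hk
    have hk' : k ≤ 2*n := by have := Finset.mem_range.mp hk; omega
    have hc : ((2*n+1-k:ℕ):ℝ) = 2*(n:ℝ)+1-(k:ℝ) := by
      push_cast [Nat.cast_sub (by omega : k ≤ 2*n+1)]; ring
    have hkr : ((k:ℝ)) ≤ 2*(n:ℝ) := by exact_mod_cast hk'
    have hc0 : (2*(n:ℝ)+1-(k:ℝ)) ≠ 0 := by nlinarith
    have hk1 : ((k:ℝ)+1) ≠ 0 := by positivity
    have hn2 : (2*(n:ℝ)+2) ≠ 0 := by positivity
    rw [hc]
    field_simp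
    ring
  rw [Finset.sum_congr rfl hpf, ← Finset.mul_sum, Finset.sum_add_distrib, hrefl, altH]
  have hn1 : ((n:ℝ)+1) ≠ 0 := by positivity
  field_simp
  ring

theorem stmt_5 (n : ℕ) (hn : 1 ≤ n) (l : ℝ) (hl0 : l ≠ 0) (hl1 : l ≠ 1) :
    harm (2 * n + 2) - harm (n + 1) =
      -1 / (2 * ((n : ℝ) + 1)) +
      ((n : ℝ) + 1) * ∑ k ∈ Finset.range (2 * n),
        l ^ (k + 2) * ynum k l / ((2 * n - k : ℕ) : ℝ) +
      ((n : ℝ) + 1) * (l - 1) * ∑ k ∈ Finset.range (2 * n + 1),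
        l ^ (k + 1) * ynum k l / ((2 * n + 1 - k : ℕ) : ℝ) := by
  have hL : l - 1 ≠ 0 := sub_ne_zero.mpr hl1
  have hn1 : ((n:ℝ)+1) ≠ 0 := by positivity
  have h2n1 : ((2*n+1:ℕ):ℝ) ≠ 0 := Nat.cast_ne_zero.mpr (by omega)
  -- the combined sum identity
  have key : ∀ k ∈ Finset.range (2*n),
      l^(k+2) * ynum k l / ((2*n-k:ℕ):ℝ)
        + (l-1) * (l^((k+1)+1) * ynum (k+1) l / ((2*n+1-(k+1):ℕ):ℝ))
      = (-1:ℝ)^(k+1) / (((k:ℝ)+2) * ((2*n-k:ℕ):ℝ)) := by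
    intro k hk
    have hk' : k < 2*n := Finset.mem_range.mp hk
    have hidx : 2*n+1-(k+1) = 2*n-k := by omega
    have hD : ((2*n-k:ℕ):ℝ) ≠ 0 := Nat.cast_ne_zero.mpr (by omega)
    have hk2 : ((k:ℝ)+2) ≠ 0 := by positivity
    rw [hidx]
    have hkr := keyrec k l hl0 hl1
    have h1 : l^(k+2) * ynum k l + (l-1) * (l^((k+1)+1) * ynum (k+1) l)
        = (-1:ℝ)^(k+1) / ((k:ℝ)+2) := by linear_combination hkr
    calc l^(k+2) * ynum k l / ((2*n-k:ℕ):ℝ)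
          + (l-1) * (l^((k+1)+1) * ynum (k+1) l / ((2*n-k:ℕ):ℝ))
        = (l^(k+2) * ynum k l + (l-1) * (l^((k+1)+1) * ynum (k+1) l)) / ((2*n-k:ℕ):ℝ) := by
          ring
      _ = ((-1:ℝ)^(k+1) / ((k:ℝ)+2)) / ((2*n-k:ℕ):ℝ) := by rw [h1]
      _ = (-1:ℝ)^(k+1) / (((k:ℝ)+2) * ((2*n-k:ℕ):ℝ)) := by rw [div_div]
  have e0 : ynum 0 l = 1/(l*(l-1)) := by
    simp [ynum]
  have hmain : (∑ k ∈ Finset.range (2*n), l^(k+2)*ynum k l/((2*n-k:ℕ):ℝ))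
      + (l-1) * (∑ k ∈ Finset.range (2*n+1), l^(k+1)*ynum k l/((2*n+1-k:ℕ):ℝ))
      = (harm (2*n+1) - harm n)/((n:ℝ)+1) := by
    rw [Finset.sum_range_succ' (fun k => l^(k+1)*ynum k l/((2*n+1-k:ℕ):ℝ)) (2*n)]
    rw [mul_add, Finset.mul_sum, ← add_assoc, ← Finset.sum_add_distrib]
    rw [Finset.sum_congr rfl key]
    rw [← Cval n]
    rw [Finset.sum_range_succ' (fun k => (-1:ℝ)^k/(((k:ℝ)+1)*((2*n+1-k:ℕ):ℝ))) (2*n)]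
    congr 1
    · apply Finset.sum_congr rfl
      intro k hk
      have hidx : 2*n+1-(k+1) = 2*n-k := by
        have := Finset.mem_range.mp hk; omega
      rw [hidx]
      push_cast
      ring
    · rw [e0]
      simp only [Nat.sub_zero, pow_one, Nat.cast_ofNat]
      push_cast
      field_simp
      ring
  -- final arithmetic
  rw [show (2*n+2) = (2*n+1)+1 from rfl, harm_succ (2*n+1), harm_succ n]
  have hfin := hmain
  have goalrw : ((n:ℝ)+1) * (∑ k ∈ Finset.range (2*n), l^(k+2)*ynum k l/((2*n-k:ℕ):ℝ))
      + ((n:ℝ)+1) * (l-1) * (∑ k ∈ Finset.range (2*n+1), l^(k+1)*ynum k l/((2*n+1-k:ℕ):ℝ))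
      = harm (2*n+1) - harm n := by
    rw [mul_assoc, ← mul_add, hmain]
    field_simp
  rw [show -1 / (2 * ((n : ℝ) + 1)) +
      ((n : ℝ) + 1) * (∑ k ∈ Finset.range (2 * n), l ^ (k + 2) * ynum k l / ((2 * n - k : ℕ) : ℝ)) +
      ((n : ℝ) + 1) * (l - 1) * (∑ k ∈ Finset.range (2 * n + 1), l ^ (k + 1) * ynum k l / ((2 * n + 1 - k : ℕ) : ℝ))
      = -1 / (2 * ((n : ℝ) + 1)) + (harm (2*n+1) - harm n) from by rw [add_assoc, goalrw]]
  push_cast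
  field_simp
  ring
end

section
/- Let n ≥ 1 be an integer and let λ be a real number with λ ≠ 0 and λ ≠ 1. Then Σ_{k=0}^{2n-2} (1-λ)^{2n+1} · y(k,λ) / ((2n-k-1)·λ^{2n-k-1}) - Σ_{k=0}^{2n-1} (1-λ)^{2n+2} · y(k,λ) / ((2n-k)·λ^{2n-k}) = 0. -/
noncomputable def anum (j : ℕ) (l : ℝ) : ℝ := 1 / (((j : ℝ) + 1) * l ^ (j + 1))

noncomputable def fnum (m : ℕ) (l : ℝ) : ℝ :=
  ∑ k ∈ Finset.range (m + 1), ynum k l * anum (m - k) l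

lemma key1 (l : ℝ) (hl0 : l ≠ 0) (hl1 : l ≠ 1) (k : ℕ) :
    (l - 1) * ynum (k+1) l + ynum k l = (-1 : ℝ)^(k+1) * anum (k+1) l := by
  have h1 : l - 1 ≠ 0 := sub_ne_zero.mpr hl1
  unfold ynum anum
  rw [Finset.sum_range_succ (n := k+1), mul_add, Finset.mul_sum]
  have hcongr : ∀ j ∈ Finset.range (k+1),
      (l-1) * ((-1:ℝ)^(k+1) / ((↑j+1)*l^(j+1)*(l-1)^(k+1+1-j)))
      = -((-1:ℝ)^k / ((↑j+1)*l^(j+1)*(l-1)^(k+1-j))) := by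
    intro j hj
    have hj' : j ≤ k := Nat.lt_succ_iff.mp (Finset.mem_range.mp hj)
    have hexp : k+1+1-j = (k+1-j)+1 := by omega
    have hjne : ((j:ℝ)+1) ≠ 0 := by positivity
    have hlp : l^(j+1) ≠ 0 := pow_ne_zero _ hl0
    have hlp2 : (l-1)^(k+1-j) ≠ 0 := pow_ne_zero _ h1
    rw [hexp, pow_succ (l-1) (k+1-j), pow_succ (-1:ℝ) k]
    field_simp
  rw [Finset.sum_congr rfl hcongr, Finset.sum_neg_distrib]
  have hlast : (k+1+1) - (k+1) = 1 := by omega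
  rw [hlast, pow_one]
  have hjne : ((k:ℝ)+1+1) ≠ 0 := by positivity
  have hlp : l^(k+1+1) ≠ 0 := pow_ne_zero _ hl0
  push_cast
  field_simp
  ring


lemma key2 (l : ℝ) (hl0 : l ≠ 0) (hl1 : l ≠ 1) (m : ℕ) :
    (l - 1) * fnum (m+1) l + fnum m l
      = ∑ k ∈ Finset.range (m+2), (-1:ℝ)^k * anum k l * anum (m+1-k) l := by
  have h1 : l - 1 ≠ 0 := sub_ne_zero.mpr hl1
  unfold fnum
  rw [Finset.mul_sum, Finset.sum_range_succ' (fun k => (l-1) * (ynum k l * anum (m+1-k) l)) (m+1),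
      Finset.sum_range_succ' (fun k => (-1:ℝ)^k * anum k l * anum (m+1-k) l) (m+1)]
  have h0 : (l-1) * (ynum 0 l * anum (m+1-0) l) = (-1:ℝ)^0 * anum 0 l * anum (m+1-0) l := by
    have hy : ynum 0 l = 1 / (l * (l-1)) := by
      simp [ynum]
    have ha : anum 0 l = 1 / l := by simp [anum]
    rw [hy, ha]
    field_simp
  rw [h0]
  have hrest : ∀ i ∈ Finset.range (m+1),
      (l-1) * (ynum (i+1) l * anum (m+1-(i+1)) l) + ynum i l * anum (m-i) l
        = (-1:ℝ)^(i+1) * anum (i+1) l * anum (m+1-(i+1)) l := by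
    intro i hi
    have : m+1-(i+1) = m-i := by omega
    rw [this, ← mul_assoc, ← add_mul, ← key1 l hl0 hl1 i]
  have hsum := Finset.sum_congr rfl hrest
  rw [Finset.sum_add_distrib] at hsum
  linarith

lemma key3 (l : ℝ) (m : ℕ) (hm : Even m) :
    ∑ k ∈ Finset.range (m+2), (-1:ℝ)^k * anum k l * anum (m+1-k) l = 0 := by
  have h := Finset.sum_range_reflect (fun k => (-1:ℝ)^k * anum k l * anum (m+1-k) l) (m+2)
  have h2 : ∀ k ∈ Finset.range (m+2),
      (-1:ℝ)^(m+2-1-k) * anum (m+2-1-k) l * anum (m+1-(m+2-1-k)) l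
        = -((-1:ℝ)^k * anum k l * anum (m+1-k) l) := by
    intro k hk
    have hk2 : k < m+2 := Finset.mem_range.mp hk
    have e1 : m+2-1-k = m+1-k := by omega
    have e2 : m+1-(m+1-k) = k := by omega
    have hmul : (-1:ℝ)^(m+1-k) * (-1)^k = -1 := by
      rw [← pow_add, show m+1-k+k = m+1 by omega]
      exact Odd.neg_one_pow (hm.add_one)
    have h4 : (-1:ℝ)^k * (-1)^k = 1 := by
      rw [← pow_add]; exact Even.neg_one_pow ⟨k, rfl⟩
    have e3 : (-1:ℝ)^(m+1-k) = -(-1)^k := by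
      calc (-1:ℝ)^(m+1-k) = ((-1)^(m+1-k) * (-1)^k) * (-1)^k := by
            rw [mul_assoc, h4, mul_one]
        _ = -(-1)^k := by rw [hmul]; ring
    rw [e1, e2, e3]; ring
  rw [Finset.sum_congr rfl h2, Finset.sum_neg_distrib] at h
  linarith

theorem stmt_6 (n : ℕ) (hn : 1 ≤ n) (l : ℝ) (hl0 : l ≠ 0) (hl1 : l ≠ 1) :
    ∑ k ∈ Finset.range (2 * n - 1),
        (1 - l) ^ (2 * n + 1) * ynum k l / (((2 * n - k - 1 : ℕ) : ℝ) * l ^ (2 * n - k - 1))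
      - ∑ k ∈ Finset.range (2 * n),
        (1 - l) ^ (2 * n + 2) * ynum k l / (((2 * n - k : ℕ) : ℝ) * l ^ (2 * n - k)) = 0 := by
  obtain ⟨m, hm2, hmeven⟩ : ∃ m, 2*n = m+2 ∧ Even m := ⟨2*n-2, by omega, ⟨n-1, by omega⟩⟩
  rw [hm2]
  have hS1 : ∑ k ∈ Finset.range (m+2-1),
      (1 - l) ^ (m+2+1) * ynum k l / (((m+2-k-1 : ℕ) : ℝ) * l ^ (m+2-k-1))
      = (1-l)^(m+2+1) * fnum m l := by
    rw [fnum, Finset.mul_sum, show m+2-1 = m+1 from rfl]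
    apply Finset.sum_congr rfl
    intro k hk
    have hk' : k < m+1 := Finset.mem_range.mp hk
    have e : m+2-k-1 = (m-k)+1 := by omega
    rw [anum, e]
    push_cast
    ring
  have hS2 : ∑ k ∈ Finset.range (m+2),
      (1 - l) ^ (m+2+2) * ynum k l / (((m+2-k : ℕ) : ℝ) * l ^ (m+2-k))
      = (1-l)^(m+2+2) * fnum (m+1) l := by
    rw [fnum, Finset.mul_sum]
    apply Finset.sum_congr rfl
    intro k hk
    have hk' : k < m+2 := Finset.mem_range.mp hk
    have e : m+2-k = (m+1-k)+1 := by omega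
    rw [anum, e]
    push_cast
    ring
  rw [hS1, hS2]
  have hkey : (l-1) * fnum (m+1) l + fnum m l = 0 := by
    rw [key2 l hl0 hl1 m]
    exact key3 l m hmeven
  have hp : (1-l)^(m+2+2) = (1-l)^(m+2+1) * (1-l) := by rw [← pow_succ]
  rw [hp]
  linear_combination (1-l)^(m+2+1) * hkey
end

section
/- Let n ≥ 1 be an integer, let λ be a real number with λ ≠ 0 and λ ≠ 1, and let x be a real number. Then (x+1)·L_n(x) - x·L_{n-1}(x) = (-1)^n · λ^{n+1} · (x^{n+1}+1) · ((λ-1)·y(n,λ) + y(n-1,λ)). -/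
/-- The Leibnitz polynomials `L_n(x) = ∑_{l=0}^{n} x^l / ((n+1)·C(n,l))`. -/
noncomputable def Leib (n : ℕ) (x : ℝ) : ℝ :=
  ∑ l ∈ Finset.range (n + 1), x ^ l / (((n : ℝ) + 1) * (n.choose l : ℝ))

lemma ynum_key (m : ℕ) (l : ℝ) (hl0 : l ≠ 0) (hl1 : l ≠ 1) :
    (l - 1) * ynum (m+1) l + ynum m l = (-1:ℝ)^(m+1) / (((m:ℝ)+2) * l^(m+2)) := by
  have hl1' : l - 1 ≠ 0 := sub_ne_zero.mpr hl1
  unfold ynum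
  rw [Finset.sum_range_succ (n := m+1), mul_add, Finset.mul_sum, add_right_comm,
    ← Finset.sum_add_distrib]
  have h0 : ∀ j ∈ Finset.range (m+1),
      (l - 1) * ((-1:ℝ)^(m+1) / ((j + 1) * l ^ (j + 1) * (l - 1) ^ (m + 1 + 1 - j)))
      + (-1:ℝ)^m / ((j + 1) * l ^ (j + 1) * (l - 1) ^ (m + 1 - j)) = 0 := by
    intro j hj
    have hj' : j ≤ m := Nat.lt_succ_iff.mp (Finset.mem_range.mp hj)
    have : m + 1 + 1 - j = (m + 1 - j) + 1 := by omega
    rw [this, pow_succ, pow_succ]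
    have hjne : ((j:ℝ) + 1) ≠ 0 := by positivity
    field_simp
    ring
  rw [Finset.sum_eq_zero h0]
  simp only [Nat.add_sub_cancel_left, pow_succ]
  push_cast
  field_simp
  ring

lemma choose_key (m j : ℕ) (hj : j ≤ m) :
    (1:ℝ) / (((m:ℝ)+1) * (m.choose j : ℝ)) =
      1 / (((m:ℝ)+2) * ((m+1).choose j : ℝ)) + 1 / (((m:ℝ)+2) * ((m+1).choose (j+1) : ℝ)) := by
  have h1 : ((m+1).choose (j+1) : ℝ) * (j+1) = ((m:ℝ)+1) * (m.choose j : ℝ) := by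
    have := Nat.add_one_mul_choose_eq m j
    exact_mod_cast congrArg (Nat.cast (R := ℝ)) this.symm
  have h2 : (m.choose j : ℝ) * ((m:ℝ)+1) = ((m+1).choose j : ℝ) * ((m:ℝ)+1-j) := by
    have := Nat.choose_mul_succ_eq m j
    have h := congrArg (Nat.cast (R := ℝ)) this
    push_cast at h
    rw [h]
    have : ((m + 1 - j : ℕ) : ℝ) = (m:ℝ)+1-j := by
      have : j ≤ m + 1 := by omega
      push_cast [this]
      ring
    rw [this]
  have c0 : (0:ℕ) < m.choose j := Nat.choose_pos hj
  have c1 : (0:ℕ) < (m+1).choose j := Nat.choose_pos (by omega)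
  have c2 : (0:ℕ) < (m+1).choose (j+1) := Nat.choose_pos (by omega)
  have c0' : (m.choose j : ℝ) ≠ 0 := by exact_mod_cast c0.ne'
  have c1' : ((m+1).choose j : ℝ) ≠ 0 := by exact_mod_cast c1.ne'
  have c2' : ((m+1).choose (j+1) : ℝ) ≠ 0 := by exact_mod_cast c2.ne'
  have hm1 : ((m:ℝ)+1) ≠ 0 := by positivity
  have hm2 : ((m:ℝ)+2) ≠ 0 := by positivity
  field_simp
  linear_combination ((m+1).choose j : ℝ) * h1 - ((m+1).choose (j+1) : ℝ) * h2

lemma leib_key (m : ℕ) (x : ℝ) :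
    (x + 1) * Leib (m+1) x - x * Leib m x = (x^(m+2) + 1) / ((m:ℝ)+2) := by
  have hx : x * Leib m x =
      x * Leib (m+1) x - x^(m+2)/((m:ℝ)+2) + (Leib (m+1) x - 1/((m:ℝ)+2)) := by
    have expand : x * Leib m x =
        (∑ j ∈ Finset.range (m+1), x^(j+1) / (((m:ℝ)+2) * ((m+1).choose j : ℝ)))
        + (∑ j ∈ Finset.range (m+1), x^(j+1) / (((m:ℝ)+2) * ((m+1).choose (j+1) : ℝ))) := by
      unfold Leib
      rw [Finset.mul_sum, ← Finset.sum_add_distrib]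
      refine Finset.sum_congr rfl ?_
      intro j hj
      have hj' : j ≤ m := Nat.lt_succ_iff.mp (Finset.mem_range.mp hj)
      have := choose_key m j hj'
      have h : x^(j+1) * (1 / (((m:ℝ)+1) * (m.choose j : ℝ)))
          = x^(j+1) * (1 / (((m:ℝ)+2) * ((m+1).choose j : ℝ)) + 1 / (((m:ℝ)+2) * ((m+1).choose (j+1) : ℝ))) := by
        rw [this]
      rw [mul_add] at h
      calc x * (x ^ j / ((↑m + 1) * ↑(m.choose j)))
          = x^(j+1) * (1 / (((m:ℝ)+1) * (m.choose j : ℝ))) := by rw [pow_succ]; ring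
        _ = _ := by rw [h]; ring_nf
    have hA : x * Leib (m+1) x = ∑ j ∈ Finset.range (m+2), x^(j+1)/(((m:ℝ)+2) * ((m+1).choose j : ℝ)) := by
      unfold Leib
      rw [Finset.mul_sum]
      refine Finset.sum_congr rfl ?_
      intro j _
      push_cast
      rw [pow_succ]; ring
    have hS1 : (∑ j ∈ Finset.range (m+1), x^(j+1) / (((m:ℝ)+2) * ((m+1).choose j : ℝ)))
        = x * Leib (m+1) x - x^(m+2)/((m:ℝ)+2) := by
      rw [Finset.sum_range_succ] at hA
      rw [hA]
      push_cast [Nat.choose_self]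
      ring
    have hB : Leib (m+1) x = (∑ j ∈ Finset.range (m+1), x^(j+1)/(((m:ℝ)+2) * ((m+1).choose (j+1) : ℝ))) + 1/((m:ℝ)+2) := by
      unfold Leib
      rw [Finset.sum_range_succ']
      push_cast [Nat.choose_zero_right]
      rw [show ((m:ℝ)+1+1) = (m:ℝ)+2 from by ring]
      norm_num
    have hS2 : (∑ j ∈ Finset.range (m+1), x^(j+1) / (((m:ℝ)+2) * ((m+1).choose (j+1) : ℝ)))
        = Leib (m+1) x - 1/((m:ℝ)+2) := by
      rw [hB]; ring
    rw [expand, hS1, hS2]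
  rw [hx]
  ring

theorem stmt_7 (n : ℕ) (hn : 1 ≤ n) (l : ℝ) (hl0 : l ≠ 0) (hl1 : l ≠ 1) (x : ℝ) :
    (x + 1) * Leib n x - x * Leib (n - 1) x =
      (-1 : ℝ) ^ n * l ^ (n + 1) * (x ^ (n + 1) + 1) *
        ((l - 1) * ynum n l + ynum (n - 1) l) := by
  obtain ⟨m, rfl⟩ : ∃ m, n = m + 1 := ⟨n - 1, by omega⟩
  simp only [Nat.add_sub_cancel]
  rw [ynum_key m l hl0 hl1, leib_key m x]
  have hm2 : ((m:ℝ)+2) ≠ 0 := by positivity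
  have hlp : l ^ (m+2) ≠ 0 := pow_ne_zero _ hl0
  have hsq : ((-1:ℝ)^(m+1)) * ((-1:ℝ)^(m+1)) = 1 := by
    rw [← pow_add]
    exact Even.neg_one_pow ⟨m+1, by ring⟩
  have h2m : (-1:ℝ)^(m*2) = 1 := by exact Even.neg_one_pow ⟨m, by ring⟩
  field_simp
  ring_nf
  rw [h2m]
  ring
end

section
/- For every nonnegative integer n, Σ_{j=0}^{n} y(j,1/2) · b_{n-j}(0) / (2^j · (n-j)!) = -4. -/
/-- The Bernoulli numbers of the second kind (Cauchy numbers)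
`b_n(0) = ∑_{k=0}^{n} S₁(n,k)/(k+1)`. -/
noncomputable def cauchyNum (n : ℕ) : ℝ :=
  ∑ k ∈ Finset.range (n + 1), (S1 n k : ℝ) / ((k : ℝ) + 1)

open Polynomial Finset

noncomputable def aseq (j : ℕ) : ℝ := (-1)^j / (j+1)

noncomputable def qpoly : ℕ → Polynomial ℝ
  | 0 => 1
  | (k+1) => Polynomial.C (((k:ℝ)+1))⁻¹ * ((Polynomial.X - Polynomial.C (k:ℝ)) * qpoly k)

noncomputable def Lpoly (m : ℕ) : Polynomial ℝ :=
  ∑ j ∈ range (m+1), C (aseq j) * qpoly (m - j)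

lemma aseq_zero : aseq 0 = 1 := by simp [aseq]

lemma aseq_rec (i : ℕ) : ((i:ℝ)+2) * aseq (i+1) = -(((i:ℝ)+1) * aseq i) := by
  have h1 : ((i:ℝ)+1) ≠ 0 := by positivity
  have h2 : ((i:ℝ)+2) ≠ 0 := by positivity
  simp only [aseq]
  push_cast
  field_simp
  ring

lemma qpoly_rec (k : ℕ) :
    C ((k:ℝ)+1) * qpoly (k+1) = (X - C (k:ℝ)) * qpoly k := by
  have h : ((k:ℝ)+1) ≠ 0 := by positivity
  rw [qpoly, ← mul_assoc, ← C_mul, mul_inv_cancel₀ h, C_1, one_mul]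

lemma key (m : ℕ) : Lpoly m = derivative (qpoly (m+1)) := by
  induction m with
  | zero =>
    simp [Lpoly, qpoly, aseq_zero]
  | succ m ih =>
    have hstep : C ((m:ℝ)+2) * Lpoly (m+1)
        = qpoly (m+1) + (X - C ((m:ℝ)+1)) * Lpoly m := by
      have e1 : C ((m:ℝ)+2) * Lpoly (m+1)
          = ∑ j ∈ range (m+2), (C (((j:ℝ)+1) * aseq j) * qpoly (m+1-j)
              + C ((((m+1-j:ℕ)):ℝ) * aseq j) * qpoly (m+1-j)) := by
        rw [Lpoly, mul_sum]
        refine sum_congr rfl (fun j hj => ?_)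
        have hj' : j ≤ m + 1 := by simpa using Nat.lt_succ_iff.mp (mem_range.mp hj)
        have hc : (((m+1-j:ℕ)):ℝ) = ((m:ℝ)+2) - ((j:ℝ)+1) := by
          rw [Nat.cast_sub hj']; push_cast; ring
        rw [← add_mul, ← C_add, ← mul_assoc, ← C_mul]
        congr 2
        rw [hc]; ring
      rw [e1, sum_add_distrib]
      have e2 : ∑ j ∈ range (m+2), C (((j:ℝ)+1) * aseq j) * qpoly (m+1-j)
          = qpoly (m+1) - ∑ j ∈ range (m+1), C (((j:ℝ)+1) * aseq j) * qpoly (m-j) := by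
        rw [Finset.sum_range_succ']
        simp only [Nat.cast_zero, zero_add, one_mul, aseq_zero, C_1, Nat.sub_zero]
        have h3 : ∀ j ∈ range (m+1),
            C (((((j+1:ℕ)):ℝ)+1) * aseq (j+1)) * qpoly (m+1-(j+1))
              = - (C (((j:ℝ)+1) * aseq j) * qpoly (m-j)) := by
          intro j hj
          have h := aseq_rec j
          have hq : m + 1 - (j+1) = m - j := by omega
          rw [hq]
          push_cast
          rw [show ((j:ℝ)+1+1) = ((j:ℝ)+2) by ring, h]
          simp [C_neg]
        rw [sum_congr rfl h3]
        rw [Finset.sum_neg_distrib]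
        ring
      have e3 : ∑ j ∈ range (m+2), C ((((m+1-j:ℕ)):ℝ) * aseq j) * qpoly (m+1-j)
          = X * Lpoly m - ∑ j ∈ range (m+1), C ((((m-j:ℕ)):ℝ) * aseq j) * qpoly (m-j) := by
        rw [Finset.sum_range_succ]
        simp only [Nat.sub_self, Nat.cast_zero, zero_mul, map_zero, zero_mul, add_zero]
        have h4 : ∀ j ∈ range (m+1),
            C ((((m+1-j:ℕ)):ℝ) * aseq j) * qpoly (m+1-j)
              = X * (C (aseq j) * qpoly (m-j)) - C ((((m-j:ℕ)):ℝ) * aseq j) * qpoly (m-j) := by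
          intro j hj
          have hq : m + 1 - j = (m-j)+1 := by
            have := mem_range.mp hj; omega
          rw [hq]
          calc C ((((m-j)+1:ℕ):ℝ) * aseq j) * qpoly ((m-j)+1)
              = C (aseq j) * (C ((((m-j:ℕ)):ℝ)+1) * qpoly ((m-j)+1)) := by
                push_cast; rw [← mul_assoc, ← C_mul]; ring_nf
            _ = C (aseq j) * ((X - C (((m-j:ℕ)):ℝ)) * qpoly (m-j)) := by
                rw [qpoly_rec]
            _ = X * (C (aseq j) * qpoly (m-j)) - C ((((m-j:ℕ)):ℝ) * aseq j) * qpoly (m-j) := by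
                rw [C_mul]; ring
        rw [sum_congr rfl h4, sum_sub_distrib, ← mul_sum, ← Lpoly]
      rw [e2, e3]
      have e4 : ∑ j ∈ range (m+1), C (((j:ℝ)+1) * aseq j) * qpoly (m-j)
            + ∑ j ∈ range (m+1), C ((((m-j:ℕ)):ℝ) * aseq j) * qpoly (m-j)
          = C ((m:ℝ)+1) * Lpoly m := by
        rw [Lpoly, mul_sum, ← sum_add_distrib]
        refine sum_congr rfl (fun j hj => ?_)
        have hj' : j ≤ m := by have := mem_range.mp hj; omega
        have hc : (((m-j:ℕ)):ℝ) = (m:ℝ) - j := by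
          rw [Nat.cast_sub hj']
        rw [← add_mul, ← C_add, ← mul_assoc, ← C_mul]
        congr 2
        rw [hc]; ring
      linear_combination -e4
    have hne : ((m:ℝ)+2) ≠ 0 := by positivity
    rw [show m+2 = (m+1)+1 from rfl, qpoly, derivative_C_mul, derivative_mul,
      derivative_sub, derivative_X, derivative_C, ← ih]
    push_cast
    rw [show (1 - 0 : Polynomial ℝ) = 1 by ring, one_mul]
    rw [← hstep]
    rw [show ((m:ℝ)+1+1) = ((m:ℝ)+2) by ring, ← mul_assoc, ← C_mul,
      inv_mul_cancel₀ hne, C_1, one_mul]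

lemma S1_eq_zero_of_lt {n k : ℕ} (h : n < k) : S1 n k = 0 := by
  induction n generalizing k with
  | zero => match k, h with
    | k+1, _ => rfl
  | succ n ih =>
    match k, h with
    | k+1, h =>
      rw [S1, ih (by omega), ih (by omega)]
      ring

noncomputable def rpoly (m : ℕ) : Polynomial ℝ :=
  ∑ l ∈ range (m+1), C ((S1 m l : ℝ)) * X^l

lemma rpoly_zero : rpoly 0 = 1 := by
  simp [rpoly, S1]

lemma rpoly_rec (m : ℕ) : rpoly (m+1) = (X - C (m:ℝ)) * rpoly m := by
  rw [rpoly, Finset.sum_range_succ']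
  have h1 : ∀ l ∈ range (m+1),
      C ((S1 (m+1) (l+1) : ℝ)) * X^(l+1)
        = X * (C ((S1 m l : ℝ)) * X^l) - C ((m:ℝ)) * (C ((S1 m (l+1) : ℝ)) * X^(l+1)) := by
    intro l hl
    rw [show S1 (m+1) (l+1) = S1 m l - (m:ℤ) * S1 m (l+1) from rfl]
    push_cast [map_sub, map_mul]
    ring
  have h2 : (C ((S1 (m+1) 0 : ℝ)) * X^0 : Polynomial ℝ)
      = - (C ((m:ℝ)) * (C ((S1 m 0 : ℝ)) * X^0)) := by
    rw [show S1 (m+1) 0 = -(m:ℤ) * S1 m 0 from rfl]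
    push_cast [map_neg, map_mul]
    ring
  rw [sum_congr rfl h1, sum_sub_distrib, ← mul_sum, ← mul_sum, h2, ← rpoly]
  have h3 : (∑ l ∈ range (m+1), C ((S1 m (l+1) : ℝ)) * X^(l+1))
        + C ((S1 m 0 : ℝ)) * X^0
      = rpoly m + C ((S1 m (m+1) : ℝ)) * X^(m+1) := by
    rw [rpoly, ← Finset.sum_range_succ]
    exact (Finset.sum_range_succ' (fun l => C ((S1 m l : ℝ)) * X^l) (m+1)).symm
  have hC : (C ((S1 m (m+1) : ℝ)) : Polynomial ℝ) = 0 := by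
    rw [S1_eq_zero_of_lt (by omega)]
    norm_num
  linear_combination (-(C ((m:ℝ)))) * h3 - C ((m:ℝ)) * X^(m+1) * hC

lemma qpoly_eq (m : ℕ) : qpoly m = C (((m.factorial : ℝ))⁻¹) * rpoly m := by
  induction m with
  | zero => simp [qpoly, rpoly_zero]
  | succ m ih =>
    rw [qpoly, ih, rpoly_rec]
    rw [show ((m+1).factorial : ℝ) = ((m:ℝ)+1) * (m.factorial : ℝ) by
      rw [Nat.factorial_succ]; push_cast; ring]
    have h1 : ((m:ℝ)+1) ≠ 0 := by positivity
    have h2 : ((m.factorial : ℝ)) ≠ 0 := by positivity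
    rw [mul_inv]
    simp only [C_mul]
    ring

noncomputable def Ival (p : Polynomial ℝ) : ℝ := ∫ x in (0:ℝ)..1, p.eval x

lemma Ival_sum {s : Finset ℕ} (f : ℕ → Polynomial ℝ) :
    Ival (∑ j ∈ s, f j) = ∑ j ∈ s, Ival (f j) := by
  unfold Ival
  rw [← intervalIntegral.integral_finset_sum]
  · simp [Polynomial.eval_finset_sum]
  · intro j hj
    exact ((f j).continuous_aeval).intervalIntegrable _ _

lemma Ival_C_mul (c : ℝ) (p : Polynomial ℝ) : Ival (C c * p) = c * Ival p := by
  unfold Ival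
  simp only [eval_mul, eval_C]
  rw [intervalIntegral.integral_const_mul]

lemma Ival_pow (l : ℕ) : Ival (X^l) = 1 / ((l:ℝ)+1) := by
  unfold Ival
  simp only [eval_pow, eval_X]
  rw [integral_pow]
  simp

lemma Ival_rpoly (m : ℕ) : Ival (rpoly m) = cauchyNum m := by
  rw [rpoly, Ival_sum, cauchyNum]
  refine sum_congr rfl (fun l hl => ?_)
  rw [Ival_C_mul, Ival_pow]
  ring

lemma Ival_qpoly (m : ℕ) : Ival (qpoly m) = cauchyNum m / (m.factorial : ℝ) := by
  rw [qpoly_eq, Ival_C_mul, Ival_rpoly]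
  rw [inv_mul_eq_div]

lemma Ival_derivative (p : Polynomial ℝ) :
    Ival (derivative p) = p.eval 1 - p.eval 0 := by
  unfold Ival
  refine intervalIntegral.integral_eq_sub_of_hasDerivAt (fun x _ => p.hasDerivAt x) ?_
  exact ((derivative p).continuous_aeval).intervalIntegrable _ _

lemma qpoly_eval_zero (k : ℕ) : (qpoly (k+1)).eval 0 = 0 := by
  induction k with
  | zero => simp [qpoly]
  | succ k ih =>
    rw [qpoly, eval_mul, eval_mul, ih, mul_zero, mul_zero]

lemma qpoly_eval_one (k : ℕ) : (qpoly (k+2)).eval 1 = 0 := by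
  induction k with
  | zero =>
    rw [show (2:ℕ) = 1 + 1 from rfl, qpoly, eval_mul, eval_mul, eval_sub, eval_X, eval_C]
    norm_num
  | succ k ih =>
    rw [show k+1+2 = (k+2)+1 from rfl, qpoly, eval_mul, eval_mul, ih, mul_zero, mul_zero]

noncomputable def Bseq (k : ℕ) : ℝ := cauchyNum k / (k.factorial : ℝ)

noncomputable def Tseq (m : ℕ) : ℝ := ∑ j ∈ range (m+1), aseq j * Bseq (m - j)

lemma Tseq_eq (m : ℕ) : Tseq m = (qpoly (m+1)).eval 1 - (qpoly (m+1)).eval 0 := by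
  rw [← Ival_derivative, ← key, Lpoly, Ival_sum, Tseq]
  refine sum_congr rfl (fun j hj => ?_)
  rw [Ival_C_mul, Ival_qpoly, Bseq]

lemma Tseq_zero : Tseq 0 = 1 := by
  rw [Tseq_eq, qpoly_eval_zero]
  simp [qpoly]

lemma Tseq_succ (m : ℕ) : Tseq (m+1) = 0 := by
  rw [Tseq_eq, qpoly_eval_zero, qpoly_eval_one]
  ring

noncomputable def Hseq (j : ℕ) : ℝ := ∑ i ∈ range (j+1), aseq i

noncomputable def Useq (n : ℕ) : ℝ := ∑ j ∈ range (n+1), Hseq j * Bseq (n - j)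

lemma Hseq_succ (j : ℕ) : Hseq (j+1) = Hseq j + aseq (j+1) :=
  Finset.sum_range_succ _ _

lemma Useq_succ (n : ℕ) : Useq (n+1) = Useq n + Tseq (n+1) := by
  have e1 : Useq (n+1)
      = (∑ j ∈ range (n+1), (Hseq j * Bseq (n-j) + aseq (j+1) * Bseq (n-j)))
        + Hseq 0 * Bseq (n+1) := by
    rw [Useq, Finset.sum_range_succ']
    congr 1
    refine sum_congr rfl (fun j hj => ?_)
    rw [show n+1-(j+1) = n-j by omega, Hseq_succ]
    ring
  have e2 : Tseq (n+1)
      = (∑ j ∈ range (n+1), aseq (j+1) * Bseq (n-j)) + aseq 0 * Bseq (n+1) := by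
    rw [Tseq, Finset.sum_range_succ']
    congr 1
    refine sum_congr rfl (fun j hj => ?_)
    rw [show n+1-(j+1) = n-j by omega]
  have e3 : Hseq 0 = aseq 0 := by simp [Hseq]
  rw [e1, e2, sum_add_distrib, Useq, e3]
  ring

lemma Useq_eq_one (n : ℕ) : Useq n = 1 := by
  induction n with
  | zero =>
    have : Useq 0 = Hseq 0 * Bseq 0 := by simp [Useq]
    rw [this]
    have h1 : Hseq 0 = 1 := by simp [Hseq, aseq]
    have h2 : Bseq 0 = 1 := by
      simp [Bseq, cauchyNum]
      norm_num [show S1 0 0 = 1 from rfl]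
    rw [h1, h2]; norm_num
  | succ n ih =>
    rw [Useq_succ, ih, Tseq_succ]
    norm_num

lemma ynum_half (j : ℕ) : ynum j (1/2) = -(2:ℝ)^(j+2) * Hseq j := by
  rw [ynum, Hseq, Finset.mul_sum]
  refine sum_congr rfl (fun i hi => ?_)
  have hi' : i ≤ j := by have := mem_range.mp hi; omega
  have e0 : ((1:ℝ)/2 - 1) = -(1/2) := by norm_num
  have hii : ((-1:ℝ))^i * (-1)^i = 1 := by rw [← mul_pow]; norm_num
  have e1 : ((-(1/2):ℝ))^(j+1-i) = (-1)^(j+1) * (-1)^i * (1/2)^(j+1-i) := by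
    rw [neg_pow]
    have hadd : ((-1:ℝ))^(j+1-i) * (-1)^i = (-1)^(j+1) := by
      rw [← pow_add]; congr 1; omega
    calc ((-1:ℝ))^(j+1-i) * (1/2)^(j+1-i)
        = ((-1:ℝ))^(j+1-i) * ((-1)^i * (-1)^i) * (1/2)^(j+1-i) := by rw [hii, mul_one]
      _ = (((-1:ℝ))^(j+1-i) * (-1)^i) * (-1)^i * (1/2)^(j+1-i) := by ring
      _ = (-1)^(j+1) * (-1)^i * (1/2)^(j+1-i) := by rw [hadd]
  have e2 : ((1/2:ℝ))^(i+1) * (1/2)^(j+1-i) = (1/2)^(j+2) := by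
    rw [← pow_add]; congr 1; omega
  have e3 : ((2:ℝ))^(j+2) * (1/2)^(j+2) = 1 := by
    rw [← mul_pow]; norm_num
  have hw : ((-1:ℝ))^(j+1) = -((-1:ℝ))^j := by rw [pow_succ]; ring
  have hne1 : ((i:ℝ)+1) ≠ 0 := by positivity
  have hne2 : ((1/2:ℝ))^(i+1) ≠ 0 := by positivity
  have hne3 : ((1/2:ℝ))^(j+1-i) ≠ 0 := by positivity
  have hne4 : ((-1:ℝ))^(j+1) ≠ 0 := by
    apply pow_ne_zero; norm_num
  have hne5 : ((-1:ℝ))^i ≠ 0 := by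
    apply pow_ne_zero; norm_num
  have hd : ((i:ℝ)+1) * (1/2)^(i+1) * ((-1)^(j+1) * (-1)^i * (1/2)^(j+1-i))
      = -(((i:ℝ)+1) * (-1)^j * (-1)^i * (1/2)^(j+2)) := by
    linear_combination (((i:ℝ)+1) * ((-1:ℝ))^(j+1) * ((-1:ℝ))^i) * e2
      + (((i:ℝ)+1) * ((-1:ℝ))^i * ((1:ℝ)/2)^(j+2)) * hw
  have ha : aseq i * ((i:ℝ)+1) = (-1)^i := by
    rw [aseq]; field_simp
  have hj6 : ((-1:ℝ))^j ≠ 0 := by apply pow_ne_zero; norm_num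
  have hp6 : ((1/2:ℝ))^(j+2) ≠ 0 := by positivity
  rw [e0, e1, hd]
  rw [div_eq_iff (by
    intro hcon
    rw [neg_eq_zero] at hcon
    rcases mul_eq_zero.mp hcon with h' | h'
    · rcases mul_eq_zero.mp h' with h'' | h''
      · rcases mul_eq_zero.mp h'' with h3 | h3
        · exact hne1 h3
        · exact hj6 h3
      · exact hne5 h''
    · exact hp6 h')]
  linear_combination (-((2:ℝ)^(j+2) * ((-1:ℝ))^j * ((-1:ℝ))^i * ((1:ℝ)/2)^(j+2))) * ha
    + (-((2:ℝ)^(j+2) * ((-1:ℝ))^j * ((1:ℝ)/2)^(j+2))) * hii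
    + (-((-1:ℝ))^j) * e3

theorem stmt_8 (n : ℕ) :
    ∑ j ∈ Finset.range (n + 1),
      ynum j (1 / 2) * cauchyNum (n - j) / (2 ^ j * ((n - j).factorial : ℝ)) = -4 := by
  have h : ∀ j ∈ range (n+1),
      ynum j (1/2) * cauchyNum (n - j) / (2 ^ j * ((n - j).factorial : ℝ))
        = -4 * (Hseq j * Bseq (n - j)) := by
    intro j hj
    rw [ynum_half, Bseq]
    have h2 : ((2:ℝ))^(j+2) = 4 * 2^j := by ring
    have hne1 : ((2:ℝ))^j ≠ 0 := by positivity
    have hne2 : (((n-j).factorial : ℝ)) ≠ 0 := by positivity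
    field_simp
    ring
  rw [sum_congr rfl h, ← Finset.mul_sum, ← Useq, Useq_eq_one]
  norm_num
end

section
/- For every nonnegative integer n, y(n,1/2) = (2^{n+2}/n!) · (n!·𝓗_n - D_n). -/
/-- The alternating harmonic numbers `𝓗_n = ∑_{j=1}^{n} (-1)^j/j` (with `𝓗_0 = 0`). -/
noncomputable def altHarm (n : ℕ) : ℝ :=
  ∑ j ∈ Finset.range n, (-1 : ℝ) ^ (j + 1) / ((j : ℝ) + 1)

/-- The Daehee numbers `D_n = (-1)^n · n!/(n+1)`. -/
noncomputable def daehee (n : ℕ) : ℝ := (-1 : ℝ) ^ n * (n.factorial : ℝ) / ((n : ℝ) + 1)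

lemma term_eq (j m : ℕ) :
    (-1 : ℝ) ^ (j + m) / ((j + 1) * (1/2 : ℝ) ^ (j + 1) * ((1/2 : ℝ) - 1) ^ (m + 1)) =
      2 ^ (j + m + 2) * ((-1 : ℝ) ^ (j + 1) / ((j : ℝ) + 1)) := by
  have h2 : ((1/2 : ℝ) - 1) = -(1/2) := by norm_num
  have hj : ((j : ℝ) + 1) ≠ 0 := by positivity
  have h1 : (1/2 : ℝ) = (2 : ℝ)⁻¹ := by norm_num
  rw [h2, h1, show (-(2:ℝ)⁻¹) = (-1) * (2:ℝ)⁻¹ from by ring, mul_pow, inv_pow, inv_pow]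
  rw [pow_add (-1 : ℝ) j m, pow_succ (-1 : ℝ) m, pow_succ (-1 : ℝ) j]
  field_simp
  ring

theorem stmt_9 (n : ℕ) :
    ynum n (1 / 2) =
      (2 ^ (n + 2) / (n.factorial : ℝ)) * ((n.factorial : ℝ) * altHarm n - daehee n) := by
  have hfac : ((n.factorial : ℝ)) ≠ 0 := by positivity
  have hn1 : ((n : ℝ) + 1) ≠ 0 := by positivity
  have hRHS : (2 ^ (n + 2) / (n.factorial : ℝ)) * ((n.factorial : ℝ) * altHarm n - daehee n)
      = 2 ^ (n + 2) * altHarm (n + 1) := by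
    have : altHarm (n + 1) = altHarm n + (-1 : ℝ) ^ (n + 1) / ((n : ℝ) + 1) := by
      simp [altHarm, Finset.sum_range_succ]
    rw [this, daehee, pow_succ]
    field_simp
    ring
  rw [hRHS, ynum, altHarm, Finset.mul_sum]
  refine Finset.sum_congr rfl fun j hj => ?_
  simp only [Finset.mem_range] at hj
  obtain ⟨m, rfl⟩ : ∃ m, n = j + m := ⟨n - j, by omega⟩
  have hsub : j + m + 1 - j = m + 1 := by omega
  rw [hsub]
  exact term_eq j m
end

section
/- Let m be a nonnegative integer and let λ be a real number with λ ≠ 0 and λ ≠ 1. Then 𝓑_m(λ) = Σ_{n=0}^{m} (n+1)! · λ^{n+1} · y(n,λ) · S₂(m,n+1). -/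
/-- The Stirling numbers of the second kind,
`S₂(n,k) = (1/k!)·∑_{c=0}^{k} (-1)^{k-c}·C(k,c)·c^n`. -/
def S2 (n k : ℕ) : ℚ :=
  (1 / (k.factorial : ℚ)) *
    ∑ c ∈ Finset.range (k + 1), (-1 : ℚ) ^ (k - c) * (k.choose c : ℚ) * (c : ℚ) ^ n

/-- The Apostol–Bernoulli numbers `𝓑_n(λ)`: `𝓑_0(λ) = 0` and for `n ≥ 1`,
`𝓑_n(λ) = (n·λ/(λ-1)^n)·∑_{c=0}^{n-1} (-1)^c·c!·λ^{c-1}·(λ-1)^{n-1-c}·S₂(n-1,c)`. -/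
noncomputable def apostolBernoulli (n : ℕ) (l : ℝ) : ℝ :=
  if n = 0 then 0
  else ((n : ℝ) * l / (l - 1) ^ n) *
    ∑ c ∈ Finset.range n, (-1 : ℝ) ^ c * (c.factorial : ℝ) * l ^ ((c : ℤ) - 1) *
      (l - 1) ^ (n - 1 - c) * (S2 (n - 1) c : ℝ)


section AuxStirling

open Finset Polynomial

/-- `Aq m j = j! * S₂(m,j)`, the alternating binomial sum (number of surjections). -/
def Aq (m j : ℕ) : ℚ :=
  ∑ c ∈ Finset.range (j + 1), (-1 : ℚ) ^ (j - c) * (j.choose c : ℚ) * (c : ℚ) ^ m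

lemma diff_step (j : ℕ) (f : ℕ → ℚ) :
    ∑ c ∈ range (j + 2), (-1 : ℚ) ^ (j + 1 - c) * ((j+1).choose c : ℚ) * f c
      = ∑ c ∈ range (j + 1), (-1 : ℚ) ^ (j - c) * (j.choose c : ℚ) * (f (c+1) - f c) := by
  rw [Finset.sum_range_succ' (fun c => (-1 : ℚ) ^ (j + 1 - c) * ((j+1).choose c : ℚ) * f c)]
  have pascal : ∀ c ∈ range (j+1),
      (-1 : ℚ) ^ (j + 1 - (c+1)) * ((j+1).choose (c+1) : ℚ) * f (c+1)
        = (-1 : ℚ) ^ (j - c) * (j.choose c : ℚ) * f (c+1)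
          + (-1 : ℚ) ^ (j - c) * (j.choose (c+1) : ℚ) * f (c+1) := by
    intro c hc
    rw [Nat.choose_succ_succ]
    have : j + 1 - (c+1) = j - c := by omega
    rw [this]
    push_cast
    ring
  rw [Finset.sum_congr rfl pascal, Finset.sum_add_distrib]
  have split : ∑ c ∈ range (j + 1), (-1 : ℚ) ^ (j - c) * (j.choose c : ℚ) * (f (c+1) - f c)
      = ∑ c ∈ range (j + 1), (-1 : ℚ) ^ (j - c) * (j.choose c : ℚ) * f (c+1)
        - ∑ c ∈ range (j + 1), (-1 : ℚ) ^ (j - c) * (j.choose c : ℚ) * f c := by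
    rw [← Finset.sum_sub_distrib]
    exact Finset.sum_congr rfl (fun c _ => by ring)
  rw [split]
  have h2 : ∑ c ∈ range (j + 1), (-1 : ℚ) ^ (j - c) * (j.choose (c+1) : ℚ) * f (c+1)
        + (-1:ℚ) ^ (j+1) * ((j+1).choose 0 : ℚ) * f 0
      = - ∑ c ∈ range (j + 1), (-1 : ℚ) ^ (j - c) * (j.choose c : ℚ) * f c := by
    rw [Finset.sum_range_succ' (fun c => (-1 : ℚ) ^ (j - c) * (j.choose c : ℚ) * f c)]
    rw [Finset.sum_range_succ (fun c => (-1 : ℚ) ^ (j - c) * (j.choose (c+1) : ℚ) * f (c+1))]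
    rw [Nat.choose_succ_self, Nat.choose_zero_right, Nat.choose_zero_right]
    have congr1 : ∀ c ∈ range j, (-1 : ℚ) ^ (j - c) * (j.choose (c+1) : ℚ) * f (c+1)
        = -((-1 : ℚ) ^ (j - (c+1)) * (j.choose (c+1) : ℚ) * f (c+1)) := by
      intro c hc
      have : j - c = (j - (c+1)) + 1 := by simp at hc; omega
      rw [this, pow_succ]
      ring
    rw [Finset.sum_congr rfl congr1, Finset.sum_neg_distrib]
    simp only [Nat.sub_zero, pow_succ]
    ring
  simp only [Nat.sub_zero] at h2 ⊢
  linarith [h2]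

lemma Aq_eq_zero : ∀ m j : ℕ, m < j → Aq m j = 0 := by
  intro m
  induction m using Nat.strong_induction_on with
  | _ m ih =>
    intro j hj
    obtain ⟨j', rfl⟩ : ∃ j', j = j' + 1 := ⟨j - 1, by omega⟩
    have expand : ∀ c : ℕ, (((c+1 : ℕ)):ℚ)^m - (c:ℚ)^m
        = ∑ i ∈ range m, (m.choose i : ℚ) * (c:ℚ)^i := by
      intro c
      have h := add_pow (c:ℚ) 1 m
      simp only [one_pow, mul_one] at h
      have hc : ∀ i ∈ range m, (c:ℚ) ^ i * (m.choose i : ℚ) = (m.choose i : ℚ) * (c:ℚ)^i :=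
        fun i _ => by ring
      push_cast
      rw [h, Finset.sum_range_succ, Nat.choose_self, Finset.sum_congr rfl hc]
      push_cast
      ring
    rw [show Aq m (j' + 1) = ∑ c ∈ range (j' + 2),
          (-1 : ℚ) ^ (j' + 1 - c) * ((j'+1).choose c : ℚ) * (fun c : ℕ => (c:ℚ)^m) c from rfl,
        diff_step j' (fun c : ℕ => (c:ℚ)^m)]
    calc ∑ c ∈ range (j' + 1), (-1 : ℚ) ^ (j' - c) * (j'.choose c : ℚ)
            * ((fun c : ℕ => (c:ℚ)^m) (c+1) - (fun c : ℕ => (c:ℚ)^m) c)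
        = ∑ c ∈ range (j' + 1), ∑ i ∈ range m,
            (m.choose i : ℚ) * ((-1 : ℚ) ^ (j' - c) * (j'.choose c : ℚ) * (c:ℚ)^i) := by
          refine Finset.sum_congr rfl (fun c _ => ?_)
          simp only
          rw [expand c, Finset.mul_sum]
          exact Finset.sum_congr rfl (fun i _ => by ring)
      _ = ∑ i ∈ range m, (m.choose i : ℚ) * Aq i j' := by
          rw [Finset.sum_comm]
          refine Finset.sum_congr rfl (fun i _ => ?_)
          rw [Aq, Finset.mul_sum]
      _ = 0 := by
          refine Finset.sum_eq_zero (fun i hi => ?_)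
          rw [ih i (mem_range.mp hi) j' (by simp at hi; omega), mul_zero]

lemma choose_mul_q (x j c : ℕ) (hcj : c ≤ j) :
    (x.choose j : ℚ) * (j.choose c : ℚ) = (x.choose c : ℚ) * ((x - c).choose (j - c) : ℚ) := by
  rcases le_or_gt j x with h | h
  · exact_mod_cast congrArg (Nat.cast : ℕ → ℚ) (Nat.choose_mul (n := x) hcj)
  · rcases le_or_gt c x with hcx | hcx
    · rw [Nat.choose_eq_zero_of_lt h, Nat.choose_eq_zero_of_lt (by omega : x - c < j - c)]
      push_cast; ring
    · rw [Nat.choose_eq_zero_of_lt h, Nat.choose_eq_zero_of_lt hcx]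
      push_cast; ring

lemma alt_sum (e D : ℕ) (h : e ≤ D) :
    ∑ d ∈ range (D + 1), (-1:ℚ)^d * (e.choose d : ℚ) = if e = 0 then 1 else 0 := by
  have sub : ∑ d ∈ range (D + 1), (-1:ℚ)^d * (e.choose d : ℚ)
      = ∑ d ∈ range (e + 1), (-1:ℚ)^d * (e.choose d : ℚ) := by
    refine (Finset.sum_subset (Finset.range_subset_range.mpr (by omega)) ?_).symm
    intro d _ hd
    rw [Nat.choose_eq_zero_of_lt (by simp at hd; omega), Nat.cast_zero, mul_zero]
  rw [sub]
  have := congrArg (fun z : ℤ => (z : ℚ)) (Int.alternating_sum_range_choose (n := e))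
  push_cast at this
  rw [this]

lemma sum_triangle {M : Type*} [AddCommMonoid M] (N : ℕ) (f : ℕ → ℕ → M) :
    ∑ n ∈ range N, ∑ k ∈ range (n + 1), f n k
      = ∑ k ∈ range N, ∑ n ∈ Finset.Ico k N, f n k := by
  induction N with
  | zero => simp
  | succ N ih =>
    rw [Finset.sum_range_succ, ih]
    have step : ∀ k ∈ range (N+1), ∑ n ∈ Finset.Ico k (N+1), f n k
        = (∑ n ∈ Finset.Ico k N, f n k) + f N k := by
      intro k hk
      exact Finset.sum_Ico_succ_top (Nat.lt_succ_iff.mp (Finset.mem_range.mp hk)) _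
    rw [Finset.sum_congr rfl step, Finset.sum_add_distrib,
      Finset.sum_range_succ (fun k => ∑ n ∈ Finset.Ico k N, f n k), Finset.Ico_self,
      Finset.sum_empty, add_zero]

lemma worpitzky (m x N : ℕ) (hx : x ≤ N) :
    ∑ j ∈ range (N + 1), Aq m j * (x.choose j : ℚ) = (x : ℚ) ^ m := by
  have expand : ∑ j ∈ range (N + 1), Aq m j * (x.choose j : ℚ)
      = ∑ j ∈ range (N + 1), ∑ c ∈ range (j + 1),
          (-1 : ℚ) ^ (j - c) * (j.choose c : ℚ) * (c : ℚ) ^ m * (x.choose j : ℚ) := by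
    refine Finset.sum_congr rfl (fun j _ => ?_)
    rw [Aq, Finset.sum_mul]
  rw [expand, sum_triangle (N+1) (fun j c =>
      (-1 : ℚ) ^ (j - c) * (j.choose c : ℚ) * (c : ℚ) ^ m * (x.choose j : ℚ))]
  have key : ∀ c ∈ range (N+1), ∑ j ∈ Finset.Ico c (N+1),
      (-1 : ℚ) ^ (j - c) * (j.choose c : ℚ) * (c : ℚ) ^ m * (x.choose j : ℚ)
      = if c = x then (x:ℚ)^m else 0 := by
    intro c hc
    have hsub : ∀ j ∈ Finset.Ico c (N+1),
        (-1:ℚ)^(j-c) * (j.choose c : ℚ) * (c:ℚ)^m * (x.choose j : ℚ)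
          = ((x.choose c : ℚ) * (c:ℚ)^m) * ((-1:ℚ)^(j-c) * (((x-c).choose (j-c) : ℕ) : ℚ)) := by
      intro j hj
      obtain ⟨h1, _⟩ := Finset.mem_Ico.mp hj
      have := choose_mul_q x j c h1
      calc (-1:ℚ)^(j-c) * (j.choose c : ℚ) * (c:ℚ)^m * (x.choose j : ℚ)
          = (-1:ℚ)^(j-c) * (c:ℚ)^m * ((x.choose j : ℚ) * (j.choose c : ℚ)) := by ring
        _ = (-1:ℚ)^(j-c) * (c:ℚ)^m * ((x.choose c : ℚ) * (((x-c).choose (j-c) : ℕ) : ℚ)) := by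
              rw [this]
        _ = ((x.choose c : ℚ) * (c:ℚ)^m) * ((-1:ℚ)^(j-c) * (((x-c).choose (j-c) : ℕ) : ℚ)) := by
              ring
    rw [Finset.sum_congr rfl hsub, ← Finset.mul_sum, Finset.sum_Ico_eq_sum_range]
    have hred : ∀ d ∈ range (N + 1 - c), (-1:ℚ)^(c + d - c) * (((x-c).choose (c + d - c) : ℕ) : ℚ)
        = (-1:ℚ)^d * (((x-c).choose d : ℕ) : ℚ) := by
      intro d _
      rw [show c + d - c = d from by omega]
    rw [Finset.sum_congr rfl hred]
    rcases le_or_gt c x with h | h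
    · have hN : N + 1 - c = (N - c) + 1 := by simp at hc; omega
      rw [hN, alt_sum (x - c) (N - c) (by omega)]
      rcases eq_or_ne c x with rfl | hne
      · simp
      · rw [if_neg (by omega), if_neg hne, mul_zero]
    · rw [Nat.choose_eq_zero_of_lt h, if_neg (by omega : ¬ c = x)]
      push_cast; ring
  rw [Finset.sum_congr rfl key, Finset.sum_ite_eq' (range (N+1)) x (fun _ => (x:ℚ)^m),
    if_pos (Finset.mem_range.mpr (by omega))]

noncomputable def bpoly : ℕ → ℚ[X]
  | 0 => 1
  | (k+1) => Polynomial.C (1 / ((k : ℚ)+1)) * (Polynomial.X - Polynomial.C (k : ℚ)) * bpoly k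

lemma bpoly_eval (k x : ℕ) : (bpoly k).eval (x : ℚ) = (x.choose k : ℚ) := by
  induction k with
  | zero => simp [bpoly]
  | succ k ih =>
    have hk : ((k:ℚ)+1) ≠ 0 := by positivity
    have h : ((x.choose (k+1) : ℚ)) * ((k:ℚ)+1) = (x.choose k : ℚ) * ((x:ℚ) - (k:ℚ)) := by
      rcases le_or_gt k x with h | h
      · have cast := congrArg (Nat.cast : ℕ → ℚ) (Nat.choose_succ_right_eq x k)
        push_cast [h] at cast
        convert cast using 2 <;> push_cast <;> ring
      · rw [Nat.choose_eq_zero_of_lt h, Nat.choose_eq_zero_of_lt (by omega)]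
        push_cast; ring
    rw [bpoly]
    simp only [eval_mul, eval_C, eval_sub, eval_X, ih]
    field_simp
    linear_combination -h

lemma shift_mul (k : ℕ) (a : ℚ) :
    (Polynomial.X - Polynomial.C a) * bpoly k
      = Polynomial.C ((k:ℚ)+1) * bpoly (k+1) + Polynomial.C ((k:ℚ) - a) * bpoly k := by
  have hk : ((k:ℚ)+1) ≠ 0 := by positivity
  have h1 : Polynomial.C ((k:ℚ)+1) * bpoly (k+1) = (X - Polynomial.C (k:ℚ)) * bpoly k := by
    rw [bpoly, ← mul_assoc, ← mul_assoc, ← Polynomial.C_mul, mul_one_div, div_self hk,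
      Polynomial.C_1, one_mul]
  rw [h1, map_sub]
  ring

lemma bpoly_deriv (n : ℕ) :
    Polynomial.derivative (bpoly (n+1))
      = ∑ k ∈ range (n+1), Polynomial.C ((-1:ℚ)^(n-k) / ((n:ℚ) + 1 - (k:ℚ))) * bpoly k := by
  induction n with
  | zero =>
    have h1 : bpoly 1 = Polynomial.C (1/((0:ℚ)+1)) * (Polynomial.X - Polynomial.C ((0:ℕ):ℚ))
        * bpoly 0 := rfl
    rw [h1]
    simp [bpoly]
  | succ n ih =>
    have hn2 : ((n:ℚ)+2) ≠ 0 := by positivity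
    set d : ℕ → ℚ := fun j => (-1:ℚ)^(n+1-j) / ((n:ℚ) + 2 - (j:ℚ)) with hd
    set e : ℕ → ℚ := fun j => (-1:ℚ)^(n+1-j) / ((n:ℚ) + 2 - (j:ℚ)) * (j:ℚ) with he
    set f : ℕ → ℚ := fun j => (-1:ℚ)^(n-j) / ((n:ℚ) + 1 - (j:ℚ)) * ((j:ℚ) - ((n:ℚ)+1)) with hf
    have hstep : bpoly (n+2) = Polynomial.C (1/((n:ℚ)+2))
        * ((Polynomial.X - Polynomial.C ((n:ℚ)+1)) * bpoly (n+1)) := by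
      have h0 : bpoly (n+2) = Polynomial.C (1/(((n+1:ℕ):ℚ)+1))
          * (Polynomial.X - Polynomial.C ((n+1:ℕ):ℚ)) * bpoly (n+1) := rfl
      rw [h0, mul_assoc]
      push_cast
      norm_num
      exact Or.inl (by ring)
    have hf_top : f (n+1) = 0 := by
      simp only [hf]
      push_cast
      simp
    -- the bracket identity
    have hcoeff : ∀ j ∈ range (n+2),
        e j + f j + (if j = n+1 then (1:ℚ) else 0) = ((n:ℚ)+2) * d j := by
      intro j hj
      rcases eq_or_ne j (n+1) with rfl | hne
      · rw [if_pos rfl, hf_top]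
        simp only [he, hd]
        push_cast
        norm_num
        all_goals ring
      · have hjn : j ≤ n := by simp at hj; omega
        have hjq : (j:ℚ) ≤ (n:ℚ) := by exact_mod_cast hjn
        have h1 : ((n:ℚ)+1-(j:ℚ)) ≠ 0 := by intro h; linarith
        have h2 : ((n:ℚ)+2-(j:ℚ)) ≠ 0 := by intro h; linarith
        rw [if_neg hne]
        simp only [he, hf, hd]
        rw [show n+1-j = (n-j)+1 from by omega, pow_succ]
        field_simp
        ring
    have hbracket : bpoly (n+1)
          + ((∑ j ∈ range (n+2), Polynomial.C (e j) * bpoly j)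
            + (∑ j ∈ range (n+2), Polynomial.C (f j) * bpoly j))
        = ∑ j ∈ range (n+2), Polynomial.C (((n:ℚ)+2) * d j) * bpoly j := by
      have hind : ∑ j ∈ range (n+2), Polynomial.C (if j = n+1 then (1:ℚ) else 0) * bpoly j
          = bpoly (n+1) := by
        have : ∀ j ∈ range (n+2), Polynomial.C (if j = n+1 then (1:ℚ) else 0) * bpoly j
            = if j = n+1 then bpoly j else 0 := by
          intro j _
          split <;> simp
        rw [Finset.sum_congr rfl this, Finset.sum_ite_eq' (range (n+2)) (n+1) bpoly,
          if_pos (Finset.mem_range.mpr (by omega))]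
      calc bpoly (n+1) + ((∑ j ∈ range (n+2), Polynomial.C (e j) * bpoly j)
            + (∑ j ∈ range (n+2), Polynomial.C (f j) * bpoly j))
          = ∑ j ∈ range (n+2), (Polynomial.C (e j) * bpoly j + Polynomial.C (f j) * bpoly j
              + Polynomial.C (if j = n+1 then (1:ℚ) else 0) * bpoly j) := by
            rw [Finset.sum_add_distrib, Finset.sum_add_distrib, hind]
            ring
        _ = ∑ j ∈ range (n+2), Polynomial.C (((n:ℚ)+2) * d j) * bpoly j := by
            refine Finset.sum_congr rfl (fun j hj => ?_)
            rw [← hcoeff j hj, map_add, map_add]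
            ring
    -- sums from the inductive expansion
    have sum1 : ∑ k ∈ range (n+1),
          Polynomial.C ((-1:ℚ)^(n-k) / ((n:ℚ) + 1 - (k:ℚ)) * ((k:ℚ)+1)) * bpoly (k+1)
        = ∑ j ∈ range (n+2), Polynomial.C (e j) * bpoly j := by
      rw [Finset.sum_range_succ' (fun j => Polynomial.C (e j) * bpoly j)]
      have h0 : Polynomial.C (e 0) * bpoly 0 = 0 := by simp [he]
      rw [h0, add_zero]
      refine (Finset.sum_congr rfl (fun k hk => ?_)).symm
      have h1 : n + 1 - (k+1) = n - k := by omega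
      simp only [he, h1]
      push_cast
      ring_nf
    have sum2 : ∑ k ∈ range (n+1), Polynomial.C (f k) * bpoly k
        = (∑ j ∈ range (n+2), Polynomial.C (f j) * bpoly j)
          - Polynomial.C (f (n+1)) * bpoly (n+1) := by
      conv_rhs => rw [Finset.sum_range_succ (fun j => Polynomial.C (f j) * bpoly j)]
      ring
    rw [hstep, derivative_C_mul, derivative_mul, derivative_sub, derivative_X, derivative_C,
      sub_zero, one_mul, ih]
    have hdist : (Polynomial.X - Polynomial.C ((n:ℚ)+1))
          * ∑ k ∈ range (n+1), Polynomial.C ((-1:ℚ)^(n-k) / ((n:ℚ) + 1 - (k:ℚ))) * bpoly k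
        = (∑ j ∈ range (n+2), Polynomial.C (e j) * bpoly j)
          + (∑ j ∈ range (n+2), Polynomial.C (f j) * bpoly j) := by
      rw [Finset.mul_sum]
      have hterm : ∀ k ∈ range (n+1),
          Polynomial.C ((-1:ℚ)^(n-k) / ((n:ℚ) + 1 - (k:ℚ))) * bpoly k
              * (Polynomial.X - Polynomial.C ((n:ℚ)+1))
          = Polynomial.C ((-1:ℚ)^(n-k) / ((n:ℚ) + 1 - (k:ℚ)) * ((k:ℚ)+1)) * bpoly (k+1)
            + Polynomial.C (f k) * bpoly k := by
        intro k _
        have := shift_mul k ((n:ℚ)+1)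
        calc Polynomial.C ((-1:ℚ)^(n-k) / ((n:ℚ) + 1 - (k:ℚ))) * bpoly k
              * (Polynomial.X - Polynomial.C ((n:ℚ)+1))
            = Polynomial.C ((-1:ℚ)^(n-k) / ((n:ℚ) + 1 - (k:ℚ)))
                * ((Polynomial.X - Polynomial.C ((n:ℚ)+1)) * bpoly k) := by ring
          _ = _ := by
              rw [this, mul_add, ← mul_assoc, ← mul_assoc, ← Polynomial.C_mul,
                ← Polynomial.C_mul]
              try simp only [hf]
              try ring
      have hcomm : ∀ k ∈ range (n+1),
          (Polynomial.X - Polynomial.C ((n:ℚ)+1))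
            * (Polynomial.C ((-1:ℚ)^(n-k) / ((n:ℚ) + 1 - (k:ℚ))) * bpoly k)
          = Polynomial.C ((-1:ℚ)^(n-k) / ((n:ℚ) + 1 - (k:ℚ)) * ((k:ℚ)+1)) * bpoly (k+1)
            + Polynomial.C (f k) * bpoly k := by
        intro k hk
        rw [show (Polynomial.X - Polynomial.C ((n:ℚ)+1))
            * (Polynomial.C ((-1:ℚ)^(n-k) / ((n:ℚ) + 1 - (k:ℚ))) * bpoly k)
          = Polynomial.C ((-1:ℚ)^(n-k) / ((n:ℚ) + 1 - (k:ℚ))) * bpoly k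
              * (Polynomial.X - Polynomial.C ((n:ℚ)+1)) from by ring]
        exact hterm k hk
      rw [Finset.sum_congr rfl hcomm, Finset.sum_add_distrib, sum1, sum2, hf_top]
      simp
    rw [hdist, hbracket, Finset.mul_sum]
    refine Finset.sum_congr rfl (fun j hj => ?_)
    rw [← mul_assoc, ← Polynomial.C_mul,
      show (1/((n:ℚ)+2)) * (((n:ℚ)+2) * d j) = d j from by field_simp]
    simp only [hd]
    push_cast
    ring_nf

lemma vanish (m : ℕ) (g : ℕ → ℚ)
    (h : ∀ x ≤ m, ∑ k ∈ range (m+1), (x.choose k : ℚ) * g k = 0) :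
    ∀ k ≤ m, g k = 0 := by
  intro k
  induction k using Nat.strong_induction_on with
  | _ k ih =>
    intro hk
    have h0 := h k hk
    rw [Finset.sum_eq_single k (fun b _ hbk => ?_) (fun hks => ?_)] at h0
    · simpa using h0
    · rcases lt_or_gt_of_ne hbk with hlt | hgt
      · rw [ih b hlt (le_trans (le_of_lt hlt) hk), mul_zero]
      · rw [Nat.choose_eq_zero_of_lt hgt, Nat.cast_zero, zero_mul]
    · exact absurd (Finset.mem_range.mpr (by omega)) hks

/-- Worpitzky's identity as a polynomial identity. -/
lemma worpitzky_poly (m : ℕ) :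
    ∑ j ∈ range (m + 2), Polynomial.C (Aq m j) * bpoly j = (Polynomial.X : ℚ[X]) ^ m := by
  apply Polynomial.eq_of_infinite_eval_eq
  apply Set.Infinite.mono (s := Set.range ((↑) : ℕ → ℚ))
  · rintro r ⟨x, rfl⟩
    have heval : Polynomial.eval ((x:ℚ)) (∑ j ∈ range (m + 2), Polynomial.C (Aq m j) * bpoly j)
        = ∑ j ∈ range (m + 2), Aq m j * (x.choose j : ℚ) := by
      rw [Polynomial.eval_finset_sum]
      exact Finset.sum_congr rfl (fun j _ => by rw [eval_mul, eval_C, bpoly_eval])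
    simp only [Set.mem_setOf_eq, heval, Polynomial.eval_pow, Polynomial.eval_X]
    rcases le_or_gt x (m+1) with hx | hx
    · exact worpitzky m x (m+1) hx
    · rw [← worpitzky m x x le_rfl]
      refine Finset.sum_subset (Finset.range_subset_range.mpr (by omega)) (fun j hj hj2 => ?_)
      rw [Aq_eq_zero m j (by simp at hj2; omega), zero_mul]
  · exact Set.infinite_range_of_injective Nat.cast_injective

/-- The key identity: `∑_{n=k}^{m} (-1)^{n-k} A(m,n+1)/(n-k+1) = m·A(m-1,k)`. -/
lemma star (m k : ℕ) (hm : 1 ≤ m) (hk : k ≤ m) :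
    ∑ n ∈ Finset.Ico k (m+1), (-1:ℚ)^(n-k) * Aq m (n+1) / ((n:ℚ) - (k:ℚ) + 1)
      = (m : ℚ) * Aq (m-1) k := by
  -- differentiate the polynomial Worpitzky identity
  have hD := congrArg Polynomial.derivative (worpitzky_poly m)
  rw [Polynomial.derivative_sum, Polynomial.derivative_X_pow] at hD
  have hD2 : ∑ n ∈ range (m+1), Polynomial.C (Aq m (n+1)) * Polynomial.derivative (bpoly (n+1))
      = Polynomial.C ((m:ℚ)) * (Polynomial.X:ℚ[X]) ^ (m - 1) := by
    rw [← hD, Finset.sum_range_succ'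
      (fun j => Polynomial.derivative (Polynomial.C (Aq m j) * bpoly j))]
    have h00 : Polynomial.derivative (Polynomial.C (Aq m 0) * bpoly 0) = 0 := by
      have : bpoly 0 = 1 := rfl
      rw [this, mul_one, Polynomial.derivative_C]
    rw [h00, add_zero]
    exact Finset.sum_congr rfl (fun n _ => by rw [Polynomial.derivative_C_mul])
  -- evaluate at natural points x ≤ m
  have heval : ∀ x : ℕ, x ≤ m →
      ∑ k' ∈ range (m+1), ((x.choose k' : ℚ)) *
        (∑ n ∈ Finset.Ico k' (m+1), Aq m (n+1) * ((-1:ℚ)^(n-k') / ((n:ℚ) + 1 - (k':ℚ)))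
          - (m:ℚ) * Aq (m-1) k') = 0 := by
    intro x hx
    have hEv := congrArg (Polynomial.eval ((x:ℚ))) hD2
    rw [Polynomial.eval_finset_sum, Polynomial.eval_mul, Polynomial.eval_C,
      Polynomial.eval_pow, Polynomial.eval_X] at hEv
    have hterm : ∀ n ∈ range (m+1),
        Polynomial.eval ((x:ℚ)) (Polynomial.C (Aq m (n+1)) * Polynomial.derivative (bpoly (n+1)))
        = ∑ k' ∈ range (n+1), Aq m (n+1) * ((-1:ℚ)^(n-k') / ((n:ℚ) + 1 - (k':ℚ)))
            * (x.choose k' : ℚ) := by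
      intro n _
      rw [Polynomial.eval_mul, Polynomial.eval_C, bpoly_deriv, Polynomial.eval_finset_sum,
        Finset.mul_sum]
      exact Finset.sum_congr rfl (fun k' _ => by rw [eval_mul, eval_C, bpoly_eval]; ring)
    rw [Finset.sum_congr rfl hterm, sum_triangle (m+1)
      (fun n k' => Aq m (n+1) * ((-1:ℚ)^(n-k') / ((n:ℚ) + 1 - (k':ℚ))) * (x.choose k' : ℚ))]
      at hEv
    -- Worpitzky for m-1
    have hW : ∑ k' ∈ range (m+1), Aq (m-1) k' * (x.choose k' : ℚ) = (x:ℚ) ^ (m-1) := by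
      obtain ⟨m', rfl⟩ : ∃ m', m = m' + 1 := ⟨m - 1, by omega⟩
      simpa using worpitzky m' x (m'+1) (by omega)
    calc ∑ k' ∈ range (m+1), ((x.choose k' : ℚ)) *
          (∑ n ∈ Finset.Ico k' (m+1), Aq m (n+1) * ((-1:ℚ)^(n-k') / ((n:ℚ) + 1 - (k':ℚ)))
            - (m:ℚ) * Aq (m-1) k')
        = (∑ k' ∈ range (m+1), ∑ n ∈ Finset.Ico k' (m+1),
              Aq m (n+1) * ((-1:ℚ)^(n-k') / ((n:ℚ) + 1 - (k':ℚ))) * (x.choose k' : ℚ))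
          - (m:ℚ) * ∑ k' ∈ range (m+1), Aq (m-1) k' * (x.choose k' : ℚ) := by
          rw [Finset.mul_sum, ← Finset.sum_sub_distrib]
          refine Finset.sum_congr rfl (fun k' _ => ?_)
          rw [mul_sub, Finset.mul_sum]
          congr 1
          · exact Finset.sum_congr rfl (fun n _ => by ring)
          · ring
      _ = 0 := by rw [hEv, hW]; ring
  -- triangular inversion
  have hvan := vanish m
    (fun k' => ∑ n ∈ Finset.Ico k' (m+1), Aq m (n+1) * ((-1:ℚ)^(n-k') / ((n:ℚ) + 1 - (k':ℚ)))
      - (m:ℚ) * Aq (m-1) k') heval k hk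
  have := sub_eq_zero.mp hvan
  rw [← this]
  exact Finset.sum_congr rfl (fun n _ => by ring)

/-- real-valued surjection numbers -/
noncomputable def AR (m j : ℕ) : ℝ := ((Aq m j : ℚ) : ℝ)

lemma fact_S2 (m j : ℕ) : (j.factorial : ℝ) * ((S2 m j : ℚ) : ℝ) = AR m j := by
  have hq : (j.factorial : ℚ) * S2 m j = Aq m j := by
    rw [S2, Aq, ← mul_assoc, mul_one_div, div_self (by exact_mod_cast j.factorial_ne_zero),
      one_mul]
  calc (j.factorial : ℝ) * ((S2 m j : ℚ) : ℝ) = (((j.factorial : ℚ) * S2 m j : ℚ) : ℝ) := by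
        push_cast; ring
    _ = AR m j := by rw [hq]; rfl

lemma star_real (m k : ℕ) (hm : 1 ≤ m) (hk : k ≤ m) :
    ∑ n ∈ Finset.Ico k (m+1), (-1:ℝ)^(n-k) * AR m (n+1) / ((n:ℝ) - (k:ℝ) + 1)
      = (m : ℝ) * AR (m-1) k := by
  simp only [AR]
  exact_mod_cast star m k hm hk


end AuxStirling

open Finset in
theorem stmt_12 (m : ℕ) (l : ℝ) (hl0 : l ≠ 0) (hl1 : l ≠ 1) :
    apostolBernoulli m l =
      ∑ n ∈ Finset.range (m + 1),
        ((n + 1).factorial : ℝ) * l ^ (n + 1) * ynum n l * (S2 m (n + 1) : ℝ) := by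
  have hu : l - 1 ≠ 0 := sub_ne_zero.mpr hl1
  rcases Nat.eq_zero_or_pos m with rfl | hm
  · have hS : S2 0 1 = 0 := by
      rw [S2]
      norm_num [Finset.sum_range_succ]
    simp [apostolBernoulli, hS]
  -- m ≥ 1
  have hmne : m ≠ 0 := by omega
  -- Step 1: termwise rewrite of the RHS summand
  have hterm : ∀ n ∈ range (m+1),
      ((n + 1).factorial : ℝ) * l ^ (n + 1) * ynum n l * (S2 m (n + 1) : ℝ)
        = ∑ k ∈ range (n+1),
            (-1:ℝ)^n * AR m (n+1) * l ^ k / (((n:ℝ) - (k:ℝ) + 1) * (l - 1) ^ (k+1)) := by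
    intro n _
    have hfac : ((n + 1).factorial : ℝ) * l ^ (n + 1) * ynum n l * (S2 m (n + 1) : ℝ)
        = ∑ j ∈ range (n+1), AR m (n+1) * l ^ (n+1) *
            ((-1 : ℝ) ^ n / (((j:ℝ) + 1) * l ^ (j + 1) * (l - 1) ^ (n + 1 - j))) := by
      rw [ynum, Finset.mul_sum, Finset.sum_mul]
      refine Finset.sum_congr rfl (fun j _ => ?_)
      rw [← fact_S2 m (n+1)]
      push_cast
      ring
    rw [hfac]
    -- reflect the sum: j ↦ n - k
    rw [← Finset.sum_range_reflect]
    refine Finset.sum_congr rfl (fun k hk => ?_)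
    have hkn : k ≤ n := by simp at hk; omega
    have h1 : n + 1 - 1 - k = n - k := by omega
    rw [h1]
    have h2 : n + 1 - (n - k) = k + 1 := by omega
    have h3 : (((n - k : ℕ)):ℝ) = (n:ℝ) - (k:ℝ) := by
      push_cast [hkn]; ring
    rw [h2, h3]
    have h4 : l ^ (n+1) = l ^ ((n-k) + 1) * l ^ k := by
      rw [← pow_add]; congr 1; omega
    rw [h4]
    have hlp : l ^ ((n-k)+1) ≠ 0 := pow_ne_zero _ hl0
    have hd1 : ((n:ℝ) - (k:ℝ) + 1) ≠ 0 := by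
      have : (k:ℝ) ≤ (n:ℝ) := by exact_mod_cast hkn
      intro h; linarith
    have hd2 : (l-1)^(k+1) ≠ 0 := pow_ne_zero _ hu
    have key : ∀ (a s x y d1 d2 : ℝ), x ≠ 0 → d1 ≠ 0 → d2 ≠ 0 →
        a * (x * y) * (s / (d1 * x * d2)) = s * a * y / (d1 * d2) := by
      intro a s x y d1 d2 hx hd1 hd2
      field_simp
    exact key (AR m (n+1)) ((-1:ℝ)^n) (l^((n-k)+1)) (l^k)
      ((n:ℝ) - (k:ℝ) + 1) ((l-1)^(k+1)) hlp hd1 hd2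
  rw [Finset.sum_congr rfl hterm, sum_triangle (m+1)
    (fun n k => (-1:ℝ)^n * AR m (n+1) * l ^ k / (((n:ℝ) - (k:ℝ) + 1) * (l - 1) ^ (k+1)))]
  -- Step 2: inner sums via star
  have hinner : ∀ k ∈ range (m+1),
      ∑ n ∈ Finset.Ico k (m+1),
          (-1:ℝ)^n * AR m (n+1) * l ^ k / (((n:ℝ) - (k:ℝ) + 1) * (l - 1) ^ (k+1))
        = ((-1:ℝ)^k * l ^ k / (l - 1) ^ (k+1)) * ((m:ℝ) * AR (m-1) k) := by
    intro k hk
    have hkm : k ≤ m := by simp at hk; omega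
    rw [← star_real m k hm hkm, Finset.mul_sum]
    refine Finset.sum_congr rfl (fun n hn => ?_)
    have hkn : k ≤ n := (Finset.mem_Ico.mp hn).1
    have hsign : (-1:ℝ)^n = (-1:ℝ)^k * (-1:ℝ)^(n-k) := by
      rw [← pow_add]; congr 1; omega
    rw [hsign]
    have hnk : ((n:ℝ) - (k:ℝ) + 1) ≠ 0 := by
      have : (k:ℝ) ≤ (n:ℝ) := by exact_mod_cast hkn
      intro h; linarith
    field_simp
  rw [Finset.sum_congr rfl hinner]
  -- Step 3: the LHS
  rw [apostolBernoulli, if_neg hmne]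
  rw [Finset.mul_sum]
  -- match term by term, after extending the sum on the right by a vanishing top term
  have htop : ((-1:ℝ)^m * l ^ m / (l - 1) ^ (m+1)) * ((m:ℝ) * AR (m-1) m) = 0 := by
    have : AR (m-1) m = 0 := by
      rw [AR, Aq_eq_zero (m-1) m (by omega), Rat.cast_zero]
    rw [this]; ring
  rw [Finset.sum_range_succ, htop, add_zero]
  refine Finset.sum_congr rfl (fun c hc => ?_)
  have hcm : c < m := Finset.mem_range.mp hc
  -- l ^ ((c:ℤ) - 1) = l ^ c / l
  have hzp : l ^ ((c:ℤ) - 1) = l ^ c / l := by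
    rw [zpow_sub₀ hl0, zpow_natCast, zpow_one]
  have hup : (l-1) ^ m = (l-1) ^ (m - 1 - c) * (l-1) ^ (c+1) := by
    rw [← pow_add]; congr 1; omega
  rw [hzp, hup, ← fact_S2 (m-1) c]
  have hu1 : (l-1) ^ (m-1-c) ≠ 0 := pow_ne_zero _ hu
  have hu2 : (l-1) ^ (c+1) ≠ 0 := pow_ne_zero _ hu
  field_simp
end
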